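/- arXiv:2012.13500 — 9 statements merged into one kernel-verified Lean document; each statement's English description precedes it below -/
import Mathlib

section
/- Let r ≥ 3 and n ≥ r be integers, let F be a field, and let f, g ∈ H_n^{(r-1)}(F) be colorings with Ψ_n^{(r-1,r)} f = Ψ_n^{(r-1,r)} g. If f ≠ g, then f and g differ on at least n − r + 2 hyperedges; that is, the number of (r−1)-element subsets e of the vertex set with f(e) ≠ g(e) is at least n − r + 2. -/
/-- if two colorings of the `(r-1)`-element subsets have the same
image under the lifting map `Ψ_n^{(r-1,r)}` and differ somewhere, then they
differ on at least `n - r + 2` hyperedges. -/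
theorem lift_eq_differ_ge (F : Type*) [Field F] [DecidableEq F] (n r : ℕ)
    (hr : 3 ≤ r) (hrn : r ≤ n)
    (f g : Finset (Fin n) → F)
    (hlift : ∀ e : Finset (Fin n), e.card = r →
      ∑ e' ∈ e.powersetCard (r - 1), f e' = ∑ e' ∈ e.powersetCard (r - 1), g e')
    (hne : ∃ e : Finset (Fin n), e.card = r - 1 ∧ f e ≠ g e) :
    n - r + 2 ≤
      (((Finset.univ : Finset (Fin n)).powersetCard (r - 1)).filter
        (fun e => f e ≠ g e)).card := by
  classical
  obtain ⟨e₀, he₀card, he₀ne⟩ := hne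
  set S := (((Finset.univ : Finset (Fin n)).powersetCard (r - 1)).filter
        (fun e => f e ≠ g e)) with hS
  have he₀S : e₀ ∈ S := by
    simp only [hS, Finset.mem_filter, Finset.mem_powersetCard]
    exact ⟨⟨Finset.subset_univ _, he₀card⟩, he₀ne⟩
  have key : ∀ v : Fin n, ∃ e' : Finset (Fin n), v ∉ e₀ →
      e' ∈ S ∧ v ∈ e' ∧ e' ⊆ insert v e₀ := by
    intro v
    by_cases hv : v ∉ e₀
    · have hcard : (insert v e₀).card = r := by
        rw [Finset.card_insert_of_notMem hv, he₀card]; omega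
      have hsum := hlift (insert v e₀) hcard
      by_contra hcon
      push_neg at hcon
      have hall : ∀ e' ∈ ((insert v e₀).powersetCard (r - 1)).erase e₀, f e' = g e' := by
        intro e' he'
        rw [Finset.mem_erase, Finset.mem_powersetCard] at he'
        obtain ⟨hne', hsub, hcard'⟩ := he'
        by_contra hfg
        have he'S : e' ∈ S := by
          simp only [hS, Finset.mem_filter, Finset.mem_powersetCard]
          exact ⟨⟨Finset.subset_univ _, hcard'⟩, hfg⟩
        have hv' : v ∉ e' := by
          intro hvmem
          exact (hcon e').2 he'S hvmem hsub
        have hsub' : e' ⊆ e₀ := fun x hx => by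
          rcases Finset.mem_insert.mp (hsub hx) with h | h
          · exact absurd (h ▸ hx) hv'
          · exact h
        exact hne' (Finset.eq_of_subset_of_card_le hsub' (by rw [hcard', he₀card]))
      have he₀mem : e₀ ∈ (insert v e₀).powersetCard (r - 1) := by
        rw [Finset.mem_powersetCard]
        exact ⟨Finset.subset_insert _ _, he₀card⟩
      rw [← Finset.add_sum_erase _ f he₀mem, ← Finset.add_sum_erase _ g he₀mem,
        Finset.sum_congr rfl hall] at hsum
      exact he₀ne (add_right_cancel hsum)
    · exact ⟨∅, fun h => absurd hv (not_not.mpr h)⟩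
  choose s hs using key
  have hmemc : ∀ v ∈ e₀ᶜ, v ∉ e₀ := fun v hv => Finset.mem_compl.mp hv
  have hinj : Set.InjOn s ↑e₀ᶜ := by
    intro v hv w hw hvw
    simp only [Finset.coe_compl, Set.mem_compl_iff, Finset.mem_coe] at hv hw
    by_contra hne'
    have hwv : w ∈ s v := hvw ▸ (hs w hw).2.1
    rcases Finset.mem_insert.mp ((hs v hv).2.2 hwv) with h | h
    · exact hne' h.symm
    · exact hw h
  have himg : insert e₀ (e₀ᶜ.image s) ⊆ S := by
    intro x hx
    rcases Finset.mem_insert.mp hx with h | h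
    · exact h ▸ he₀S
    · obtain ⟨v, hv, rfl⟩ := Finset.mem_image.mp h
      exact (hs v (hmemc v hv)).1
  have hnotmem : e₀ ∉ e₀ᶜ.image s := by
    intro h
    obtain ⟨v, hv, hveq⟩ := Finset.mem_image.mp h
    have := (hs v (hmemc v hv)).2.1
    rw [hveq] at this
    exact hmemc v hv this
  have hcardimg : (e₀ᶜ.image s).card = e₀ᶜ.card := Finset.card_image_of_injOn hinj
  have hcardc : e₀ᶜ.card = n - (r - 1) := by
    rw [Finset.card_compl, he₀card, Fintype.card_fin]
  have := Finset.card_le_card himg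
  rw [Finset.card_insert_of_notMem hnotmem, hcardimg, hcardc] at this
  omega
end

section
/- Let r ≥ 3 be odd, let n ≥ r, let f ∈ H_n^{(r-1)}(F_2), and let g = Ψ_n^{(r-1,r)} f. Suppose W is a set of vertices with |W| ≥ r and c ∈ F_2 is such that g(e) = c for every r-element subset e of W. Define a simple graph on W by making distinct vertices a and b adjacent if and only if there exists an (r−1)-element subset e of W with a ∈ e, b ∈ e, and f(e) = c. Then this graph has at most r − 1 connected components (isolated vertices of W counting as components). -/
/-- let `r ≥ 3` be odd, `g = Ψ_n^{(r-1,r)} f`, and suppose every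
`r`-element subset of `W` gets color `c` under `g` (where `|W| ≥ r`).  Then the
graph on `W` joining two distinct vertices when some `(r-1)`-element subset of
`W` containing both has `f`-color `c` has at most `r - 1` connected
components. -/
theorem components_le (n r : ℕ) (hr : 3 ≤ r) (hodd : Odd r) (hrn : r ≤ n)
    (f : Finset (Fin n) → ZMod 2) (c : ZMod 2)
    (W : Finset (Fin n)) (hW : r ≤ W.card)
    (hmono : ∀ e : Finset (Fin n), e ⊆ W → e.card = r →
      ∑ e' ∈ e.powersetCard (r - 1), f e' = c) :
    Nat.card
      (SimpleGraph.fromRel (fun a b : {x // x ∈ W} =>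
        ∃ e : Finset (Fin n), e ⊆ W ∧ e.card = r - 1 ∧
          (a : Fin n) ∈ e ∧ (b : Fin n) ∈ e ∧ f e = c)).ConnectedComponent
      ≤ r - 1 := by
  classical
  set G := SimpleGraph.fromRel (fun a b : {x // x ∈ W} =>
        ∃ e : Finset (Fin n), e ⊆ W ∧ e.card = r - 1 ∧
          (a : Fin n) ∈ e ∧ (b : Fin n) ∈ e ∧ f e = c) with hG
  by_contra hcon
  push_neg at hcon
  have hr' : r ≤ Nat.card G.ConnectedComponent := by omega
  have : Fintype G.ConnectedComponent := Fintype.ofFinite _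
  rw [Nat.card_eq_fintype_card] at hr'
  obtain ⟨emb⟩ : Nonempty (Fin r ↪ G.ConnectedComponent) := by
    rw [Function.Embedding.nonempty_iff_card_le]
    simpa using hr'
  choose v hv using fun i => (emb i).exists_rep
  have hvinj : Function.Injective v := by
    intro i j hij
    apply emb.injective
    rw [← hv i, ← hv j, hij]
  set T : Finset (Fin n) := Finset.image (fun i => (v i : Fin n)) Finset.univ with hT
  have hTinj : Function.Injective (fun i => (v i : Fin n)) := by
    intro i j hij
    exact hvinj (Subtype.ext hij)
  have hTcard : T.card = r := by
    rw [hT, Finset.card_image_of_injective _ hTinj, Finset.card_univ, Fintype.card_fin]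
  have hTW : T ⊆ W := by
    intro x hx
    rw [hT, Finset.mem_image] at hx
    obtain ⟨i, -, rfl⟩ := hx
    exact (v i).2
  have hsum := hmono T hTW hTcard
  have hex : ∃ e' ∈ T.powersetCard (r - 1), f e' = c := by
    by_contra h
    push_neg at h
    have hne : ∀ x y : ZMod 2, x ≠ y → x = y + 1 := by decide
    have hconst : ∀ e' ∈ T.powersetCard (r - 1), f e' = c + 1 :=
      fun e' he' => hne _ _ (h e' he')
    rw [Finset.sum_congr rfl hconst, Finset.sum_const, Finset.card_powersetCard,
      hTcard] at hsum
    have hch : r.choose (r - 1) = r := by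
      rw [← Nat.choose_symm (by omega : r - 1 ≤ r)]
      simp [Nat.sub_sub_self (by omega : 1 ≤ r)]
    rw [hch, nsmul_eq_mul] at hsum
    have hr2 : (r : ZMod 2) = 1 := by
      obtain ⟨k, rfl⟩ := hodd
      push_cast
      rw [show (2 : ZMod 2) = 0 by decide]
      ring
    rw [hr2, one_mul] at hsum
    have : (1 : ZMod 2) = 0 := by
      have := hsum
      have h2 : c = c + 1 := hsum.symm
      exact (left_eq_add.mp h2)
    exact one_ne_zero this
  obtain ⟨e', he', hfe'⟩ := hex
  rw [Finset.mem_powersetCard] at he'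
  obtain ⟨he'T, he'card⟩ := he'
  obtain ⟨a, ha, b, hb, hab⟩ := Finset.one_lt_card.mp (by omega : 1 < e'.card)
  obtain ⟨i, -, hi⟩ := Finset.mem_image.mp (he'T ha)
  obtain ⟨j, -, hj⟩ := Finset.mem_image.mp (he'T hb)
  have hij : i ≠ j := by
    rintro rfl
    exact hab (hi ▸ hj ▸ rfl)
  have hadj : G.Adj (v i) (v j) := by
    rw [hG, SimpleGraph.fromRel_adj]
    refine ⟨fun h => hij (hvinj h), Or.inl ⟨e', fun x hx => hTW (he'T hx), he'card, ?_, ?_, hfe'⟩⟩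
    · rw [hi]; exact ha
    · rw [hj]; exact hb
  have : emb i = emb j := by
    rw [← hv i, ← hv j]
    exact SimpleGraph.ConnectedComponent.sound hadj.reachable
  exact hij (emb.injective this)
end

section
/- Let r ≥ 3 be odd and let n ≥ r + 1. For every coloring f ∈ H_n^{(r-1)}(F_2), the lifted coloring g = Ψ_n^{(r-1,r)} f contains no induced copy of K_m^{(r)} − e in either color: there do not exist an integer m with r + 1 ≤ m ≤ n, an m-element set S of vertices, a color c ∈ F_2, and an r-element subset e₀ of S such that g(e) = c for every r-element subset e of S with e ≠ e₀ while g(e₀) = c + 1. -/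
lemma card_filter_supersets {n r : ℕ} (T e' : Finset (Fin n)) (hT : T.card = r + 1)
    (he' : e' ⊆ T) (hc : e'.card = r - 1) (hr : 3 ≤ r) :
    ((T.powersetCard r).filter (fun e => e' ⊆ e)).card = 2 := by
  have hcard : (T \ e').card = 2 := by
    rw [Finset.card_sdiff_of_subset he', hT, hc]
    omega
  rw [← hcard]
  apply (Finset.card_bij (fun a _ => insert a e' ) ?_ ?_ ?_).symm
  · intro a ha
    rw [Finset.mem_sdiff] at ha
    rw [Finset.mem_filter, Finset.mem_powersetCard]
    refine ⟨⟨Finset.insert_subset ha.1 he', ?_⟩, Finset.subset_insert _ _⟩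
    rw [Finset.card_insert_of_notMem ha.2, hc]; omega
  · intro a ha b hb h
    rw [Finset.mem_sdiff] at ha hb
    have := Finset.mem_insert_self a e'
    rw [h, Finset.mem_insert] at this
    rcases this with h' | h'
    · exact h'
    · exact absurd h' ha.2
  · intro e he
    rw [Finset.mem_filter, Finset.mem_powersetCard] at he
    obtain ⟨⟨heT, hec⟩, hsub⟩ := he
    have h1 : (e \ e').card = 1 := by
      rw [Finset.card_sdiff_of_subset hsub, hec, hc]; omega
    obtain ⟨x, hx⟩ := Finset.card_eq_one.mp h1
    refine ⟨x, ?_, ?_⟩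
    · have hxm : x ∈ e \ e' := by rw [hx]; exact Finset.mem_singleton_self x
      rw [Finset.mem_sdiff] at hxm ⊢
      exact ⟨heT hxm.1, hxm.2⟩
    · apply Finset.Subset.antisymm
      · apply Finset.insert_subset
        · have : x ∈ e \ e' := by rw [hx]; exact Finset.mem_singleton_self x
          exact (Finset.mem_sdiff.mp this).1
        · exact hsub
      · intro y hy
        by_cases hye : y ∈ e'
        · exact Finset.mem_insert_of_mem hye
        · have : y ∈ e \ e' := Finset.mem_sdiff.mpr ⟨hy, hye⟩
          rw [hx, Finset.mem_singleton] at this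
          rw [this]; exact Finset.mem_insert_self x e'

lemma double_sum_zero {n r : ℕ} (hr : 3 ≤ r) (f : Finset (Fin n) → ZMod 2)
    (T : Finset (Fin n)) (hT : T.card = r + 1) :
    ∑ e ∈ T.powersetCard r, ∑ e' ∈ e.powersetCard (r - 1), f e' = 0 := by
  have step : ∀ e ∈ T.powersetCard r,
      ∑ e' ∈ e.powersetCard (r - 1), f e'
        = ∑ e' ∈ T.powersetCard (r - 1), if e' ⊆ e then f e' else 0 := by
    intro e he
    rw [Finset.mem_powersetCard] at he
    rw [← Finset.sum_filter]
    apply Finset.sum_congr _ (fun _ _ => rfl)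
    ext e'
    rw [Finset.mem_powersetCard, Finset.mem_filter, Finset.mem_powersetCard]
    constructor
    · exact fun h => ⟨⟨h.1.trans he.1, h.2⟩, h.1⟩
    · exact fun h => ⟨h.2, h.1.2⟩
  rw [Finset.sum_congr rfl step, Finset.sum_comm]
  apply Finset.sum_eq_zero
  intro e' he'
  rw [Finset.mem_powersetCard] at he'
  rw [← Finset.sum_filter, Finset.sum_const,
    card_filter_supersets T e' hT he'.1 he'.2 hr]
  rw [two_nsmul]
  exact CharTwo.add_self_eq_zero (f e')

/-- for odd `r ≥ 3` and `n ≥ r + 1`, no lifted coloring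
`Ψ_n^{(r-1,r)} f` contains an induced copy of `K_m^{(r)} - e` in either
color. -/
theorem no_induced_clique_minus_edge (n r : ℕ) (hr : 3 ≤ r) (hodd : Odd r)
    (hn : r + 1 ≤ n) (f : Finset (Fin n) → ZMod 2) :
    ¬ ∃ (m : ℕ) (S : Finset (Fin n)) (c : ZMod 2) (e₀ : Finset (Fin n)),
        r + 1 ≤ m ∧ m ≤ n ∧ S.card = m ∧ e₀ ⊆ S ∧ e₀.card = r ∧
        (∀ e : Finset (Fin n), e ⊆ S → e.card = r → e ≠ e₀ →
          ∑ e' ∈ e.powersetCard (r - 1), f e' = c) ∧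
        ∑ e' ∈ e₀.powersetCard (r - 1), f e' = c + 1 := by
  rintro ⟨m, S, c, e₀, hm1, hm2, hS, he₀S, he₀c, hgood, hbad⟩
  -- find T with e₀ ⊆ T ⊆ S, |T| = r + 1
  obtain ⟨T, hTe₀, hTS, hTcard⟩ :=
    Finset.exists_subsuperset_card_eq (n := r + 1) he₀S (by omega) (by omega)
  have hzero := double_sum_zero hr f T hTcard
  have he₀T : e₀ ∈ T.powersetCard r := Finset.mem_powersetCard.mpr ⟨hTe₀, he₀c⟩
  rw [← Finset.add_sum_erase _ _ he₀T, hbad] at hzero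
  have hrest : ∀ e ∈ (T.powersetCard r).erase e₀,
      ∑ e' ∈ e.powersetCard (r - 1), f e' = c := by
    intro e he
    rw [Finset.mem_erase, Finset.mem_powersetCard] at he
    exact hgood e (he.2.1.trans hTS) he.2.2 he.1
  rw [Finset.sum_congr rfl hrest, Finset.sum_const,
    Finset.card_erase_of_mem he₀T, Finset.card_powersetCard, hTcard] at hzero
  have hch : Nat.choose (r + 1) r = r + 1 := Nat.choose_succ_self_right r
  rw [hch] at hzero
  -- (r+1) - 1 = r, and r • c = c since r is odd
  have : (c + 1) + r • c = 0 := by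
    convert hzero using 3
    omega
  obtain ⟨k, hk⟩ := hodd
  rw [hk] at this
  have h2 : (2 * k + 1) • c = c := by
    rw [add_nsmul, mul_nsmul, one_nsmul, two_nsmul]
    rw [CharTwo.add_self_eq_zero c]
    simp
  rw [h2] at this
  rw [add_comm c 1, add_assoc, CharTwo.add_self_eq_zero, add_zero] at this
  exact one_ne_zero this
end

section
/- Let s, t ≥ 1 and let G be the disjoint union of the complete graphs K_s and K_t. If r is even with 4 ≤ r < s + t, then G is r-neutral: there exist a set of r vertices of G inducing a subgraph with an odd number of edges and a set of r vertices inducing a subgraph with an even number of edges. -/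
/-- The disjoint union `K_s ⊔ K_t`: two vertices of `Fin s ⊕ Fin t` are
adjacent exactly when they are distinct and lie in the same part. -/
def disjointUnionComplete (s t : ℕ) : SimpleGraph (Fin s ⊕ Fin t) :=
  SimpleGraph.fromRel (fun a b => a.isLeft = b.isLeft)

open SimpleGraph Finset

lemma duc_adj (s t : ℕ) (x y : Fin s ⊕ Fin t) :
    (disjointUnionComplete s t).Adj x y ↔ x ≠ y ∧ x.isLeft = y.isLeft := by
  unfold disjointUnionComplete
  rw [SimpleGraph.fromRel_adj]
  constructor
  · rintro ⟨h, h2 | h2⟩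
    · exact ⟨h, h2⟩
    · exact ⟨h, h2.symm⟩
  · rintro ⟨h, h2⟩; exact ⟨h, Or.inl h2⟩

instance duc_dec (s t : ℕ) : DecidableRel (disjointUnionComplete s t).Adj := fun x y =>
  decidable_of_iff _ (duc_adj s t x y).symm

lemma duc_degree_left (a b : ℕ) (i : Fin a) :
    (disjointUnionComplete a b).degree (Sum.inl i) = a - 1 := by
  unfold SimpleGraph.degree
  have h : (disjointUnionComplete a b).neighborFinset (Sum.inl i)
      = ((univ : Finset (Fin a)).image Sum.inl).erase (Sum.inl i) := by
    ext w
    cases w with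
    | inl j => simp [duc_adj, ne_comm]
    | inr j => simp [duc_adj]
  rw [h, Finset.card_erase_of_mem (by simp),
    Finset.card_image_of_injective _ Sum.inl_injective, Finset.card_univ, Fintype.card_fin]

lemma duc_degree_right (a b : ℕ) (j : Fin b) :
    (disjointUnionComplete a b).degree (Sum.inr j) = b - 1 := by
  unfold SimpleGraph.degree
  have h : (disjointUnionComplete a b).neighborFinset (Sum.inr j)
      = ((univ : Finset (Fin b)).image Sum.inr).erase (Sum.inr j) := by
    ext w
    cases w with
    | inl i => simp [duc_adj]
    | inr i => simp [duc_adj, ne_comm]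
  rw [h, Finset.card_erase_of_mem (by simp),
    Finset.card_image_of_injective _ Sum.inr_injective, Finset.card_univ, Fintype.card_fin]

lemma duc_card_edges (a b : ℕ) :
    Nat.card (disjointUnionComplete a b).edgeSet = a.choose 2 + b.choose 2 := by
  have hsum := SimpleGraph.sum_degrees_eq_twice_card_edges (disjointUnionComplete a b)
  rw [Fintype.sum_sum_type] at hsum
  simp only [duc_degree_left, duc_degree_right, Finset.sum_const, Finset.card_univ,
    Fintype.card_fin, smul_eq_mul] at hsum
  have hc : ∀ n : ℕ, 2 * n.choose 2 = n * (n - 1) := by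
    intro n
    rw [Nat.choose_two_right]
    rcases n with _ | m
    · simp
    · obtain ⟨k, hk⟩ := Nat.even_mul_succ_self m
      simp only [Nat.succ_sub_one]
      have hcomm : (m + 1) * m = m * (m + 1) := Nat.mul_comm _ _
      omega
  have h2 : 2 * Nat.card (disjointUnionComplete a b).edgeSet
      = 2 * (a.choose 2 + b.choose 2) := by
    rw [Nat.card_eq_fintype_card, ← SimpleGraph.edgeFinset_card, ← hsum]
    have := hc a; have := hc b
    omega
  omega

/-- Key construction: for `x ≤ s`, `y ≤ t`, there is a vertex set of size `x + y`
inducing exactly `x.choose 2 + y.choose 2` edges. -/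
lemma duc_witness (s t x y : ℕ) (hx : x ≤ s) (hy : y ≤ t) :
    ∃ U : Finset (Fin s ⊕ Fin t), U.card = x + y ∧
      Nat.card ((disjointUnionComplete s t).induce
        (↑U : Set (Fin s ⊕ Fin t))).edgeSet = x.choose 2 + y.choose 2 := by
  set f : Fin x ⊕ Fin y → Fin s ⊕ Fin t := Sum.map (Fin.castLE hx) (Fin.castLE hy) with hf
  have hinj : Function.Injective f :=
    Function.Injective.sumMap (Fin.castLE_injective hx) (Fin.castLE_injective hy)
  refine ⟨Finset.univ.map ⟨f, hinj⟩, by simp, ?_⟩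
  have hrange : (↑(Finset.univ.map ⟨f, hinj⟩) : Set (Fin s ⊕ Fin t)) = Set.range f := by
    ext w; simp
  have hiso : (disjointUnionComplete x y) ≃g
      ((disjointUnionComplete s t).induce
        (↑(Finset.univ.map ⟨f, hinj⟩) : Set (Fin s ⊕ Fin t))) := by
    refine ⟨(Equiv.ofInjective f hinj).trans (Equiv.setCongr hrange.symm), ?_⟩
    intro u v
    simp only [Equiv.trans_apply, Equiv.setCongr_apply, comap_adj, Function.Embedding.coe_subtype,
      Equiv.ofInjective_apply, duc_adj]
    constructor
    · rintro ⟨h1, h2⟩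
      exact ⟨fun he => h1 (by rw [he]), by cases u <;> cases v <;> simpa [hf] using h2⟩
    · rintro ⟨h1, h2⟩
      exact ⟨fun he => h1 (hinj he), by cases u <;> cases v <;> simpa [hf] using h2⟩
  rw [← Nat.card_congr hiso.mapEdgeSet, duc_card_edges]

lemma choose_shift (a c : ℕ) :
    (a + 1).choose 2 + c.choose 2 + c = a.choose 2 + (c + 1).choose 2 + a := by
  simp [Nat.choose_succ_succ, Nat.choose_one_right]
  omega

/-- for `s, t ≥ 1` and even `r` with `4 ≤ r < s + t`, the graph
`K_s ⊔ K_t` is `r`-neutral: some `r` vertices induce an odd number of edges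
and some `r` vertices induce an even number of edges. -/
theorem disjointUnion_r_neutral (s t r : ℕ) (hs : 1 ≤ s) (ht : 1 ≤ t)
    (hr4 : 4 ≤ r) (hreven : Even r) (hrst : r < s + t) :
    (∃ U : Finset (Fin s ⊕ Fin t), U.card = r ∧
      Odd (Nat.card ((disjointUnionComplete s t).induce
        (↑U : Set (Fin s ⊕ Fin t))).edgeSet)) ∧
    (∃ U : Finset (Fin s ⊕ Fin t), U.card = r ∧
      Even (Nat.card ((disjointUnionComplete s t).induce
        (↑U : Set (Fin s ⊕ Fin t))).edgeSet)) := by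
  -- choose a = number on left
  set a : ℕ := r - min r t with ha
  have hb : a + (r - a) = r := by omega
  have h1 : a ≤ s := by omega
  have h2 : r - a ≤ t := by omega
  have h3 : a + 1 ≤ s := by omega
  have h4 : r - a - 1 ≤ t := by omega
  have h5 : 1 ≤ r - a := by omega
  obtain ⟨U0, hU0c, hU0e⟩ := duc_witness s t a (r - a) h1 h2
  obtain ⟨U1, hU1c, hU1e⟩ := duc_witness s t (a + 1) (r - a - 1) h3 h4
  rw [hb] at hU0c
  have hU1c' : U1.card = r := by rw [hU1c]; omega
  -- parity relation
  have hkey := choose_shift a (r - a - 1)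
  rw [(by omega : r - a - 1 + 1 = r - a)] at hkey
  have hpar : (r : ℕ) % 2 = 0 := Nat.even_iff.mp hreven
  by_cases he : Even (a.choose 2 + (r - a).choose 2)
  · refine ⟨⟨U1, hU1c', ?_⟩, ⟨U0, hU0c, ?_⟩⟩
    · rw [hU1e, Nat.odd_iff]
      rw [Nat.even_iff] at he
      omega
    · rwa [hU0e]
  · refine ⟨⟨U0, hU0c, ?_⟩, ⟨U1, hU1c', ?_⟩⟩
    · rw [hU0e]; exact Nat.odd_iff.mpr (by rw [Nat.even_iff] at he; omega)
    · rw [hU1e, Nat.even_iff]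
      rw [Nat.even_iff] at he
      omega
end

section
/- Let s, t ≥ 1 and let G be the disjoint union of the complete graphs K_s and K_t. If r ≡ 1 (mod 4) with 3 ≤ r < s + t, then G is r-void: every subgraph of G induced by a selection of r vertices has an even number of edges. -/
open Finset

lemma parity_key_aux (a b E : ℕ) (h : 2 * E + (a + b) = a * a + b * b)
    (h4 : (a + b) % 4 = 1) : Even E := by
  have hs : (a * a + b * b) % 4 = 1 := by
    have ha : a % 4 < 4 := Nat.mod_lt _ (by norm_num)
    have hb : b % 4 < 4 := Nat.mod_lt _ (by norm_num)
    have h1 : ((a % 4) + (b % 4)) % 4 = 1 := by rw [← Nat.add_mod]; exact h4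
    have h2 : ((a % 4) * (a % 4) + (b % 4) * (b % 4)) % 4 = 1 := by
      obtain ⟨x, hx⟩ : ∃ x, a % 4 = x := ⟨_, rfl⟩
      obtain ⟨y, hy⟩ : ∃ y, b % 4 = y := ⟨_, rfl⟩
      rw [hx] at ha h1 ⊢
      rw [hy] at hb h1 ⊢
      interval_cases x <;> interval_cases y <;> omega
    rw [Nat.add_mod, Nat.mul_mod a a, Nat.mul_mod b b, ← Nat.add_mod]
    exact h2
  rw [Nat.even_iff]
  omega

lemma count_edges_aux {W : Type*} [Fintype W] [DecidableEq W] (f : W → Bool)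
    (G : SimpleGraph W) [DecidableRel G.Adj]
    (hadj : ∀ x y, G.Adj x y ↔ x ≠ y ∧ f x = f y) :
    2 * G.edgeFinset.card + Fintype.card W =
      (univ.filter (fun x => f x = true)).card * (univ.filter (fun x => f x = true)).card
      + (univ.filter (fun x => f x = false)).card * (univ.filter (fun x => f x = false)).card := by
  classical
  have hdeg : ∀ v : W, G.degree v + 1 = (univ.filter (fun x => f x = f v)).card := by
    intro v
    have hnb : G.neighborFinset v = (univ.filter (fun x => f x = f v)).erase v := by
      ext w
      simp only [SimpleGraph.mem_neighborFinset, hadj, mem_erase, mem_filter, mem_univ, true_and]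
      constructor
      · rintro ⟨hne, hfe⟩; exact ⟨fun h => hne h.symm, hfe.symm⟩
      · rintro ⟨hne, hfe⟩; exact ⟨fun h => hne h.symm, hfe.symm⟩
    have hv : v ∈ univ.filter (fun x => f x = f v) := by simp
    rw [SimpleGraph.degree, hnb, card_erase_of_mem hv]
    have : 1 ≤ (univ.filter (fun x => f x = f v)).card := card_pos.mpr ⟨v, hv⟩
    omega
  have hsum : ∑ v : W, (G.degree v + 1) =
      ∑ v : W, (univ.filter (fun x => f x = f v)).card :=
    Finset.sum_congr rfl (fun v _ => hdeg v)
  rw [Finset.sum_add_distrib, SimpleGraph.sum_degrees_eq_twice_card_edges] at hsum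
  simp only [Finset.sum_const, smul_eq_mul, mul_one, Finset.card_univ] at hsum
  rw [hsum]
  rw [← Finset.sum_filter_add_sum_filter_not univ (fun v => f v = true)]
  congr 1
  · rw [Finset.sum_congr rfl (fun v hv => by
      simp only [mem_filter] at hv
      rw [hv.2]), Finset.sum_const, smul_eq_mul]
  · have hflt : univ.filter (fun v => ¬ f v = true) = univ.filter (fun v => f v = false) := by
      ext v; simp
    rw [hflt]
    rw [Finset.sum_congr rfl (fun v hv => by
      simp only [mem_filter] at hv
      rw [hv.2]), Finset.sum_const, smul_eq_mul]

/-- for `s, t ≥ 1` and `r ≡ 1 (mod 4)` with `3 ≤ r < s + t`, the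
graph `K_s ⊔ K_t` is `r`-void: every `r` vertices induce an even number of
edges. -/
theorem disjointUnion_r_void (s t r : ℕ) (hs : 1 ≤ s) (ht : 1 ≤ t)
    (hr : 3 ≤ r) (hrmod : r % 4 = 1) (hrst : r < s + t) :
    ∀ U : Finset (Fin s ⊕ Fin t), U.card = r →
      Even (Nat.card ((disjointUnionComplete s t).induce
        (↑U : Set (Fin s ⊕ Fin t))).edgeSet) := by
  classical
  intro U hU
  set G' := (disjointUnionComplete s t).induce (↑U : Set (Fin s ⊕ Fin t)) with hG'
  have hadj : ∀ x y : (↑U : Set (Fin s ⊕ Fin t)),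
      G'.Adj x y ↔ x ≠ y ∧ (x : Fin s ⊕ Fin t).isLeft = (y : Fin s ⊕ Fin t).isLeft := by
    intro x y
    constructor
    · rintro ⟨hne, h | h⟩
      · exact ⟨fun h' => hne (congrArg _ h'), h⟩
      · exact ⟨fun h' => hne (congrArg _ h'), h.symm⟩
    · rintro ⟨hne, h⟩
      exact ⟨fun h' => hne (Subtype.ext h'), Or.inl h⟩
  haveI : DecidableRel G'.Adj := fun x y => decidable_of_iff _ (hadj x y).symm
  have key := count_edges_aux (fun x : (↑U : Set (Fin s ⊕ Fin t)) =>
    (x : Fin s ⊕ Fin t).isLeft) G' hadj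
  have hcardW : Fintype.card (↑U : Set (Fin s ⊕ Fin t)) = r := by
    rw [← Nat.card_eq_fintype_card, Nat.card_coe_set_eq, Set.ncard_coe_finset, hU]
  have hab : (univ.filter (fun x : (↑U : Set (Fin s ⊕ Fin t)) =>
        (x : Fin s ⊕ Fin t).isLeft = true)).card
      + (univ.filter (fun x : (↑U : Set (Fin s ⊕ Fin t)) =>
        (x : Fin s ⊕ Fin t).isLeft = false)).card = r := by
    rw [← hcardW, ← Finset.card_univ]
    rw [← Finset.card_filter_add_card_filter_not
      (s := (univ : Finset (↑U : Set (Fin s ⊕ Fin t))))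
      (p := fun x => (x : Fin s ⊕ Fin t).isLeft = true)]
    congr 1
    apply Finset.card_bij (fun x _ => x) <;> simp
  have hNE : Nat.card G'.edgeSet = G'.edgeFinset.card := by
    rw [Nat.card_eq_fintype_card, SimpleGraph.edgeFinset, Set.toFinset_card]
  rw [hNE]
  apply parity_key_aux _ _ _ _ (by rw [hab]; exact hrmod)
  beta_reduce at key
  rw [hcardW] at key
  omega
end

section
/- Let s, t ≥ 1 and let G be the disjoint union of the complete graphs K_s and K_t. If r ≡ 3 (mod 4) with 3 ≤ r < s + t, then G is r-complete: every subgraph of G induced by a selection of r vertices has an odd number of edges. -/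
lemma aux_mul_pred_mod4 (a : ℕ) : a*(a-1) % 4 = if a % 4 = 2 ∨ a % 4 = 3 then 2 else 0 := by
  obtain ⟨k, x, hx, rfl⟩ : ∃ k x, x < 4 ∧ a = 4*k + x :=
    ⟨a/4, a%4, Nat.mod_lt _ (by norm_num), by omega⟩
  interval_cases x
  · rw [if_neg (by omega), Nat.add_zero, Nat.mul_assoc]
    exact Nat.mul_mod_right 4 _
  · rw [if_neg (by omega), show 4*k+1-1 = 4*k from rfl,
      show (4*k+1)*(4*k) = 4*((4*k+1)*k) by ring]
    exact Nat.mul_mod_right 4 _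
  · rw [if_pos (by omega), show 4*k+2-1 = 4*k+1 from rfl,
      show (4*k+2)*(4*k+1) = 4*(4*k*k+3*k)+2 by ring]
    simp [Nat.mul_add_mod]
  · rw [if_pos (by omega), show 4*k+3-1 = 4*k+2 from rfl,
      show (4*k+3)*(4*k+2) = 4*(4*k*k+5*k+1)+2 by ring]
    simp [Nat.mul_add_mod]

lemma aux_key (a b : ℕ) (h : (a + b) % 4 = 3) : (a*(a-1) + b*(b-1)) % 4 = 2 := by
  have ha := aux_mul_pred_mod4 a
  have hb := aux_mul_pred_mod4 b
  split_ifs at ha hb <;> omega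

/-- for `s, t ≥ 1` and `r ≡ 3 (mod 4)` with `3 ≤ r < s + t`, the
graph `K_s ⊔ K_t` is `r`-complete: every `r` vertices induce an odd number of
edges. -/
theorem disjointUnion_r_complete (s t r : ℕ) (hs : 1 ≤ s) (ht : 1 ≤ t)
    (hr : 3 ≤ r) (hrmod : r % 4 = 3) (hrst : r < s + t) :
    ∀ U : Finset (Fin s ⊕ Fin t), U.card = r →
      Odd (Nat.card ((disjointUnionComplete s t).induce
        (↑U : Set (Fin s ⊕ Fin t))).edgeSet) := by
  intro U hU
  classical
  set G := disjointUnionComplete s t with hG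
  set H := G.induce (↑U : Set (Fin s ⊕ Fin t)) with hH
  haveI : DecidableRel H.Adj := fun x y => Classical.dec _
  have hadj : ∀ x y : ↥(↑U : Set (Fin s ⊕ Fin t)), H.Adj x y ↔
      (x : Fin s ⊕ Fin t) ≠ ↑y ∧ (x : Fin s ⊕ Fin t).isLeft = (y : Fin s ⊕ Fin t).isLeft := by
    intro x y
    constructor
    · rintro ⟨hne, h | h⟩
      · exact ⟨hne, h⟩
      · exact ⟨hne, h.symm⟩
    · rintro ⟨hne, h⟩
      exact ⟨hne, Or.inl h⟩
  set g : (Fin s ⊕ Fin t) → ℕ :=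
    fun v => (U.filter fun y => y ≠ v ∧ y.isLeft = v.isLeft).card with hg
  have hdeg : ∀ x : ↥(↑U : Set (Fin s ⊕ Fin t)), H.degree x = g ↑x := by
    intro x
    rw [SimpleGraph.degree, hg]
    refine Finset.card_bij (fun y _ => (y : Fin s ⊕ Fin t)) ?_ ?_ ?_
    · intro y hy
      rw [SimpleGraph.mem_neighborFinset, hadj] at hy
      simp only [Finset.mem_filter]
      exact ⟨Finset.mem_coe.mp y.2, Ne.symm hy.1, hy.2.symm⟩
    · intro y _ z _ h
      exact Subtype.ext h
    · intro v hv
      simp only [Finset.mem_filter] at hv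
      refine ⟨⟨v, Finset.mem_coe.mpr hv.1⟩, ?_, rfl⟩
      rw [SimpleGraph.mem_neighborFinset, hadj]
      exact ⟨Ne.symm hv.2.1, hv.2.2.symm⟩
  set A := U.filter (fun v => v.isLeft = true) with hA
  set B := U.filter (fun v => ¬ v.isLeft = true) with hB
  have hgA : ∀ v ∈ A, g v = A.card - 1 := by
    intro v hv
    have hvl : v.isLeft = true := (Finset.mem_filter.mp hv).2
    have hfe : (U.filter fun y => y ≠ v ∧ y.isLeft = v.isLeft) = A.erase v := by
      ext y
      simp only [Finset.mem_filter, Finset.mem_erase, hA, hvl]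
      tauto
    rw [hg]
    simp only [hfe]
    exact Finset.card_erase_of_mem hv
  have hgB : ∀ v ∈ B, g v = B.card - 1 := by
    intro v hv
    have hvl : ¬ v.isLeft = true := (Finset.mem_filter.mp hv).2
    have hvl' : v.isLeft = false := by simpa using hvl
    have hfe : (U.filter fun y => y ≠ v ∧ y.isLeft = v.isLeft) = B.erase v := by
      ext y
      simp only [Finset.mem_filter, Finset.mem_erase, hB, hvl']
      constructor
      · rintro ⟨hyU, hyne, hyl⟩
        exact ⟨hyne, hyU, by simp [hyl]⟩
      · rintro ⟨hyne, hyU, hyl⟩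
        exact ⟨hyU, hyne, by simpa using hyl⟩
    rw [hg]
    simp only [hfe]
    exact Finset.card_erase_of_mem hv
  have hsum := H.sum_degrees_eq_twice_card_edges
  have h1 : ∑ x : ↥(↑U : Set (Fin s ⊕ Fin t)), H.degree x
      = A.card * (A.card - 1) + B.card * (B.card - 1) := by
    calc ∑ x : ↥(↑U : Set (Fin s ⊕ Fin t)), H.degree x
        = ∑ x : ↥(↑U : Set (Fin s ⊕ Fin t)), g ↑x :=
          Finset.sum_congr rfl (fun x _ => hdeg x)
      _ = ∑ v ∈ U, g v := Finset.sum_finset_coe g U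
      _ = ∑ v ∈ A, g v + ∑ v ∈ B, g v :=
          (Finset.sum_filter_add_sum_filter_not U _ g).symm
      _ = A.card * (A.card - 1) + B.card * (B.card - 1) := by
          rw [Finset.sum_congr rfl hgA, Finset.sum_congr rfl hgB,
            Finset.sum_const, Finset.sum_const, smul_eq_mul, smul_eq_mul]
  have hcards : A.card + B.card = r := by
    rw [hA, hB, ← hU]
    exact Finset.card_filter_add_card_filter_not _
  have hkey : (A.card * (A.card - 1) + B.card * (B.card - 1)) % 4 = 2 :=
    aux_key _ _ (by omega)
  have hEcard : Nat.card H.edgeSet = H.edgeFinset.card := by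
    rw [Nat.card_eq_fintype_card, SimpleGraph.edgeFinset, Set.toFinset_card]
  rw [h1] at hsum
  obtain ⟨p, hp⟩ : ∃ p, p = A.card * (A.card - 1) := ⟨_, rfl⟩
  obtain ⟨q, hq⟩ : ∃ q, q = B.card * (B.card - 1) := ⟨_, rfl⟩
  rw [← hp, ← hq] at hsum hkey
  rw [hEcard, Nat.odd_iff]
  omega
end

section
/- For every integer n ≥ 3, the lifting map Ψ_n^{(2,3)} : H_n^{(2)}(F_2) → H_n^{(3)}(F_2) is exactly 2^{n−1}-to-one: for every coloring g in the image of Ψ_n^{(2,3)}, the number of colorings f ∈ H_n^{(2)}(F_2) with Ψ_n^{(2,3)} f = g equals 2^{n−1}. Equivalently, the kernel of the linear map Ψ_n^{(2,3)} has exactly 2^{n−1} elements. -/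
def lift23 (n : ℕ) (f : {e : Finset (Fin n) // e.card = 2} → ZMod 2) :
    {e : Finset (Fin n) // e.card = 3} → ZMod 2 :=
  fun e => ∑ e' ∈ ((e : Finset (Fin n)).powersetCard 2).attach,
    f ⟨e'.val, (Finset.mem_powersetCard.mp e'.property).2⟩

namespace Lift23Aux

variable {n : ℕ}

/-- extend a coloring of 2-sets to all finsets by 0 -/
def ext2 (f : {e : Finset (Fin n) // e.card = 2} → ZMod 2) : Finset (Fin n) → ZMod 2 :=
  fun s => if h : s.card = 2 then f ⟨s, h⟩ else 0

lemma lift23_eq (f : {e : Finset (Fin n) // e.card = 2} → ZMod 2)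
    (e : {e : Finset (Fin n) // e.card = 3}) :
    lift23 n f e = ∑ e' ∈ (e : Finset (Fin n)).powersetCard 2, ext2 f e' := by
  rw [lift23, ← Finset.sum_attach ((e : Finset (Fin n)).powersetCard 2) (ext2 f)]
  refine Finset.sum_congr rfl fun x _ => ?_
  rw [ext2, dif_pos (Finset.mem_powersetCard.mp x.property).2]

lemma pc2_triple {a b c : Fin n} (hab : a ≠ b) (hac : a ≠ c) (hbc : b ≠ c) :
    ({a, b, c} : Finset (Fin n)).powersetCard 2 =
      {({b, c} : Finset (Fin n)), {a, b}, {a, c}} := by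
  ext s
  simp only [Finset.mem_powersetCard, Finset.mem_insert, Finset.mem_singleton]
  constructor
  · rintro ⟨hsub, hcard⟩
    obtain ⟨x, y, hxy, rfl⟩ := Finset.card_eq_two.mp hcard
    have hx := hsub (Finset.mem_insert_self x {y})
    have hy := hsub (Finset.mem_insert_of_mem (Finset.mem_singleton_self y))
    simp only [Finset.mem_insert, Finset.mem_singleton] at hx hy
    rcases hx with rfl | rfl | rfl <;> rcases hy with rfl | rfl | rfl <;>
      simp_all [Finset.pair_comm]
  · rintro (rfl | rfl | rfl) <;>
      exact ⟨by simp [Finset.insert_subset_iff], by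
        first
        | exact Finset.card_pair hbc
        | exact Finset.card_pair hab
        | exact Finset.card_pair hac⟩

lemma sum_triple (F : Finset (Fin n) → ZMod 2) {a b c : Fin n}
    (hab : a ≠ b) (hac : a ≠ c) (hbc : b ≠ c) :
    ∑ e' ∈ ({a, b, c} : Finset (Fin n)).powersetCard 2, F e' =
      F {b, c} + F {a, b} + F {a, c} := by
  rw [pc2_triple hab hac hbc]
  have h1 : ({b, c} : Finset (Fin n)) ∉ ({({a, b} : Finset (Fin n)), {a, c}} : Finset _) := by
    simp only [Finset.mem_insert, Finset.mem_singleton]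
    rintro (h | h) <;>
    · have := h ▸ (Finset.mem_insert_self a _)
      simp only [Finset.mem_insert, Finset.mem_singleton] at this
      tauto
  have h2 : ({a, b} : Finset (Fin n)) ∉ ({({a, c} : Finset (Fin n))} : Finset _) := by
    simp only [Finset.mem_singleton]
    intro h
    have := h ▸ (Finset.mem_insert_of_mem (Finset.mem_singleton_self b))
    simp only [Finset.mem_insert, Finset.mem_singleton] at this
    tauto
  rw [Finset.sum_insert h1, Finset.sum_insert h2, Finset.sum_singleton]
  ring

lemma mk_triple_card {a b c : Fin n} (hab : a ≠ b) (hac : a ≠ c) (hbc : b ≠ c) :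
    ({a, b, c} : Finset (Fin n)).card = 3 := by
  rw [Finset.card_insert_of_notMem (by simp [hab, hac]), Finset.card_pair hbc]

/-- Kernel condition in terms of triples. -/
lemma kernel_iff (f : {e : Finset (Fin n) // e.card = 2} → ZMod 2) :
    lift23 n f = (fun _ => 0) ↔
      ∀ a b c : Fin n, a ≠ b → a ≠ c → b ≠ c →
        ext2 f {b, c} + ext2 f {a, b} + ext2 f {a, c} = 0 := by
  constructor
  · intro h a b c hab hac hbc
    have := congrFun h ⟨{a, b, c}, mk_triple_card hab hac hbc⟩
    rwa [lift23_eq, sum_triple _ hab hac hbc] at this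
  · intro h
    funext e
    obtain ⟨a, b, c, hab, hac, hbc, he⟩ := Finset.card_eq_three.mp e.property
    rw [lift23_eq]
    have he' : (e : Finset (Fin n)) = {a, b, c} := he
    rw [he', sum_triple _ hab hac hbc]
    exact h a b c hab hac hbc

/-- cut coloring associated to a vertex labeling -/
def cutF (h : Fin n → ZMod 2) : {e : Finset (Fin n) // e.card = 2} → ZMod 2 :=
  fun e => ∑ x ∈ (e : Finset (Fin n)), h x

lemma ext2_cutF (h : Fin n → ZMod 2) {a b : Fin n} (hab : a ≠ b) :
    ext2 (cutF h) {a, b} = h a + h b := by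
  rw [ext2, dif_pos (Finset.card_pair hab)]
  exact Finset.sum_pair hab

lemma cutF_kernel (h : Fin n → ZMod 2) : lift23 n (cutF h) = (fun _ => 0) := by
  rw [kernel_iff]
  intro a b c hab hac hbc
  rw [ext2_cutF h hbc, ext2_cutF h hab, ext2_cutF h hac]
  have h2 : ∀ x : ZMod 2, x + x = 0 := by decide
  calc h b + h c + (h a + h b) + (h a + h c)
      = (h a + h a) + ((h b + h b) + (h c + h c)) := by ring
    _ = 0 := by rw [h2, h2, h2]; ring

/-- additivity of lift23 -/
lemma lift23_add (f f' : {e : Finset (Fin n) // e.card = 2} → ZMod 2) :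
    lift23 n (f + f') = lift23 n f + lift23 n f' := by
  funext e
  simp only [lift23, Pi.add_apply, ← Finset.sum_add_distrib]

/-- extend a labeling of nonzero vertices by 0 at z -/
def extz (z : Fin n) (h : {x : Fin n // x ≠ z} → ZMod 2) : Fin n → ZMod 2 :=
  fun x => if hx : x = z then 0 else h ⟨x, hx⟩

lemma extz_at (z : Fin n) (h : {x : Fin n // x ≠ z} → ZMod 2) : extz z h z = 0 :=
  dif_pos rfl

lemma extz_ne (z : Fin n) (h : {x : Fin n // x ≠ z} → ZMod 2) {x : Fin n} (hx : x ≠ z) :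
    extz z h x = h ⟨x, hx⟩ := dif_neg hx

/-- restriction map from kernel elements to labelings of nonzero vertices -/
def resz (z : Fin n) (f : {e : Finset (Fin n) // e.card = 2} → ZMod 2) :
    {x : Fin n // x ≠ z} → ZMod 2 :=
  fun x => f ⟨{z, x.val}, Finset.card_pair (Ne.symm x.property)⟩

def kernel_equiv (z : Fin n) :
    {f : {e : Finset (Fin n) // e.card = 2} → ZMod 2 // lift23 n f = fun _ => 0} ≃
      ({x : Fin n // x ≠ z} → ZMod 2) where
  toFun f := resz z f.val
  invFun h := ⟨cutF (extz z h), cutF_kernel _⟩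
  left_inv := by
    have h2 : ∀ x : ZMod 2, x + x = 0 := by decide
    rintro ⟨f, hf⟩
    ext e
    obtain ⟨a, b, hab, he⟩ := Finset.card_eq_two.mp e.property
    have key2 : ∀ (a b : Fin n) (hab : a ≠ b) (hc : ({a, b} : Finset (Fin n)).card = 2),
        cutF (extz z (resz z f)) ⟨{a, b}, hc⟩ = f ⟨{a, b}, hc⟩ := by
      intro a b hab hc
      have hsum : cutF (extz z (resz z f)) ⟨{a, b}, hc⟩
          = extz z (resz z f) a + extz z (resz z f) b := Finset.sum_pair hab
      rw [hsum]
      by_cases ha : a = z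
      · subst ha
        rw [extz_at, extz_ne _ _ (Ne.symm hab), zero_add, resz]
      · by_cases hb : b = z
        · subst hb
          rw [extz_at, extz_ne _ _ ha, add_zero, resz]
          exact congrArg f (Subtype.ext (Finset.pair_comm b a))
        · rw [extz_ne z _ ha, extz_ne z _ hb, resz]
          -- use kernel condition on the triple {z, a, b}
          have hk := (kernel_iff f).mp hf z a b (Ne.symm ha) (Ne.symm hb) hab
          rw [ext2, dif_pos hc, ext2, dif_pos (Finset.card_pair (Ne.symm ha)),
            ext2, dif_pos (Finset.card_pair (Ne.symm hb))] at hk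
          -- hk : f{a,b} + f{z,a} + f{z,b} = 0
          calc f ⟨{z, a}, _⟩ + f ⟨{z, b}, _⟩
              = f ⟨{a, b}, hc⟩ + (f ⟨{a, b}, hc⟩ + f ⟨{z, a}, _⟩ + f ⟨{z, b}, _⟩) := by
                rw [show ∀ x y w : ZMod 2, x + (x + y + w) = (x + x) + (y + w) from
                  fun x y w => by ring, h2, zero_add]
            _ = f ⟨{a, b}, hc⟩ := by rw [hk, add_zero]
    have hval : e = (⟨{a, b}, he ▸ e.property⟩ : {e : Finset (Fin n) // e.card = 2}) :=
      Subtype.ext he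
    rw [hval]
    exact key2 a b hab _
  right_inv := by
    intro h
    funext x
    have hsum : cutF (extz z h) ⟨{z, x.val}, Finset.card_pair (Ne.symm x.property)⟩
        = extz z h z + extz z h x.val := Finset.sum_pair (Ne.symm x.property)
    show resz z (cutF (extz z h)) x = h x
    rw [resz, hsum, extz_at, zero_add, extz_ne z h x.property]

end Lift23Aux

open Lift23Aux in
/-- for `n ≥ 3`, the lifting map `Ψ_n^{(2,3)}` is exactly
`2^(n-1)`-to-one: every coloring in its image has exactly `2^(n-1)` preimages;
equivalently, its kernel has exactly `2^(n-1)` elements. -/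
theorem lift23_two_pow_to_one (n : ℕ) (hn : 3 ≤ n)
    (g : {e : Finset (Fin n) // e.card = 3} → ZMod 2)
    (hg : ∃ f, lift23 n f = g) :
    Nat.card {f : {e : Finset (Fin n) // e.card = 2} → ZMod 2 // lift23 n f = g}
        = 2 ^ (n - 1) ∧
    Nat.card {f : {e : Finset (Fin n) // e.card = 2} → ZMod 2 //
        lift23 n f = fun _ => 0} = 2 ^ (n - 1) := by
  have hn0 : 0 < n := by omega
  have h2 : ∀ x : ZMod 2, x + x = 0 := by decide
  set z : Fin n := ⟨0, hn0⟩ with hz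
  have key : Nat.card {f : {e : Finset (Fin n) // e.card = 2} → ZMod 2 //
      lift23 n f = fun _ => 0} = 2 ^ (n - 1) := by
    rw [Nat.card_congr (kernel_equiv z)]
    have : Nat.card ({x : Fin n // x ≠ z} → ZMod 2) =
        2 ^ (Fintype.card {x : Fin n // x ≠ z}) := by
      simp [Nat.card_eq_fintype_card, Fintype.card_fun]
    rw [this]
    congr 1
    rw [Fintype.card_subtype_compl, Fintype.card_fin, Fintype.card_subtype_eq]
  refine ⟨?_, key⟩
  obtain ⟨f₀, hf₀⟩ := hg
  have E2 : {f : {e : Finset (Fin n) // e.card = 2} → ZMod 2 // lift23 n f = g} ≃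
      {f : {e : Finset (Fin n) // e.card = 2} → ZMod 2 // lift23 n f = fun _ => 0} :=
    { toFun := fun f => ⟨f.val + f₀, by
        rw [lift23_add, f.property, hf₀]
        funext e
        simp only [Pi.add_apply]
        exact h2 _⟩
      invFun := fun f => ⟨f.val + f₀, by
        rw [lift23_add, f.property, hf₀]
        funext e
        simp only [Pi.add_apply, zero_add]⟩
      left_inv := by
        rintro ⟨f, hf⟩
        ext e
        simp only [Pi.add_apply]
        calc f e + f₀ e + f₀ e = f e + (f₀ e + f₀ e) := by ring
          _ = f e := by rw [h2, add_zero]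
      right_inv := by
        rintro ⟨f, hf⟩
        ext e
        simp only [Pi.add_apply]
        calc f e + f₀ e + f₀ e = f e + (f₀ e + f₀ e) := by ring
          _ = f e := by rw [h2, add_zero] }
  rw [Nat.card_congr E2, key]
end

section
/- Let s₁, s₂, s₃ ≥ 3 and let n ≥ 3. Suppose there exists a 3-coloring χ of the 2-element subsets of an n-element vertex set with colors {1, 2, 3} such that for each i ∈ {1, 2, 3} there is no s_i-element vertex set all of whose 2-element subsets receive color i. Then there exists a 3-coloring ψ of the 3-element subsets of the same vertex set with colors {1, 2, 3} such that: there is no (2s₁−1)-element vertex set all but at most one of whose 3-element subsets receive color 1 (i.e., no copy of K_{2s₁−1}^{(3)} − e in color 1); there is no (2s₂−1)-element vertex set all of whose 3-element subsets receive color 2; and there is no (2s₃−1)-element vertex set all of whose 3-element subsets receive color 3. Consequently, the Ramsey number satisfies R(K_{2s₁−1}^{(3)} − e, K_{2s₂−1}^{(3)}, K_{2s₃−1}^{(3)}; 3) ≥ R(K_{s₁}, K_{s₂}, K_{s₃}; 2). -/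
open Finset

/-- The coloring `χ` of subsets of an `p`-element vertex set contains a
monochromatic complete `r`-uniform `K_m^{(r)}` in color `i`: an `m`-element
vertex set all of whose `r`-element subsets receive color `i`. -/
def HasMonoClique {C : Type} (p : ℕ) (χ : Finset (Fin p) → C) (r : ℕ)
    (i : C) (m : ℕ) : Prop :=
  ∃ S : Finset (Fin p), S.card = m ∧
    ∀ e : Finset (Fin p), e ⊆ S → e.card = r → χ e = i

/-- The coloring `ψ` of 3-element subsets contains a copy of `K_m^{(3)} - e` in
color `i`: an `m`-element vertex set all but at most one of whose 3-element
subsets receive color `i`. -/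
def HasCliqueMinusEdge {C : Type} [DecidableEq C] (p : ℕ)
    (ψ : Finset (Fin p) → C) (i : C) (m : ℕ) : Prop :=
  ∃ S : Finset (Fin p), S.card = m ∧
    ((S.powersetCard 3).filter (fun e => ψ e ≠ i)).card ≤ 1

/-- The graph Ramsey number `R(K_{s₁}, K_{s₂}, K_{s₃}; 2)`. -/
noncomputable def RGraph3 (s₁ s₂ s₃ : ℕ) : ℕ :=
  sInf {p | 0 < p ∧ ∀ χ : Finset (Fin p) → Fin 3,
    HasMonoClique p χ 2 0 s₁ ∨ HasMonoClique p χ 2 1 s₂ ∨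
      HasMonoClique p χ 2 2 s₃}

/-- The hypergraph Ramsey number
`R(K_{2s₁-1}^{(3)} - e, K_{2s₂-1}^{(3)}, K_{2s₃-1}^{(3)}; 3)`. -/
noncomputable def RHyp3 (s₁ s₂ s₃ : ℕ) : ℕ :=
  sInf {p | 0 < p ∧ ∀ ψ : Finset (Fin p) → Fin 3,
    HasCliqueMinusEdge p ψ 0 (2 * s₁ - 1) ∨
      HasMonoClique p ψ 3 1 (2 * s₂ - 1) ∨
        HasMonoClique p ψ 3 2 (2 * s₃ - 1)}

/-- Two-uniform (graph) Ramsey theorem for 3 colors. -/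
lemma ramsey2 : ∀ (n : ℕ) (m : Fin 3 → ℕ), (∑ i, m i) ≤ n →
    ∃ p : ℕ, ∀ (α : Type) [DecidableEq α] (V : Finset α) (χ : Finset α → Fin 3),
      p ≤ V.card → ∃ i : Fin 3, ∃ S : Finset α, S ⊆ V ∧ S.card = m i ∧
        ∀ e : Finset α, e ⊆ S → e.card = 2 → χ e = i := by
  intro n
  induction n with
  | zero =>
    intro m hm
    have hm0 : m 0 = 0 := by
      have := Finset.single_le_sum (f := m) (fun _ _ => Nat.zero_le _) (mem_univ 0)
      omega
    refine ⟨0, fun α _ V χ _ => ⟨0, ∅, empty_subset _, by simp [hm0], ?_⟩⟩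
    intro e he hec
    rw [Finset.subset_empty.mp he] at hec
    simp at hec
  | succ n IH =>
    intro m hm
    by_cases h0 : ∃ i, m i = 0
    · obtain ⟨i, hi⟩ := h0
      refine ⟨0, fun α _ V χ _ => ⟨i, ∅, empty_subset _, by simp [hi], ?_⟩⟩
      intro e he hec
      rw [Finset.subset_empty.mp he] at hec
      simp at hec
    · push_neg at h0
      have hsum : ∀ i : Fin 3, (∑ j, Function.update m i (m i - 1) j) ≤ n := by
        intro i
        have e1 : ∑ j, Function.update m i (m i - 1) j
            = (m i - 1) + ∑ j ∈ Finset.univ \ {i}, m j := by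
          rw [Finset.sum_update_of_mem (mem_univ i)]
        have e2 : m i + ∑ j ∈ Finset.univ \ {i}, m j = ∑ j, m j := by
          rw [← Finset.erase_eq]
          exact Finset.add_sum_erase _ _ (mem_univ i)
        have := h0 i
        omega
      have hP : ∀ i : Fin 3, ∃ p : ℕ, ∀ (α : Type) [DecidableEq α] (V : Finset α)
          (χ : Finset α → Fin 3), p ≤ V.card → ∃ j : Fin 3, ∃ S : Finset α,
          S ⊆ V ∧ S.card = Function.update m i (m i - 1) j ∧
          ∀ e : Finset α, e ⊆ S → e.card = 2 → χ e = j :=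
        fun i => IH _ (hsum i)
      choose P hP using hP
      refine ⟨P 0 + P 1 + P 2 + 1, ?_⟩
      intro α _ V χ hV
      obtain ⟨v, hv⟩ : V.Nonempty := card_pos.mp (by omega)
      have hWcard : P 0 + P 1 + P 2 ≤ (V.erase v).card := by
        rw [card_erase_of_mem hv]; omega
      set N : Fin 3 → Finset α := fun i => (V.erase v).filter (fun x => χ (insert v {x}) = i)
        with hN
      have hNW : ∀ i, N i ⊆ V.erase v := fun i => filter_subset _ _
      have hex : ∃ i, P i ≤ (N i).card := by
        by_contra hc
        push_neg at hc
        have hsub : V.erase v ⊆ N 0 ∪ N 1 ∪ N 2 := by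
          intro x hx
          have h3 : χ (insert v {x}) = 0 ∨ χ (insert v {x}) = 1 ∨ χ (insert v {x}) = 2 := by
            generalize χ (insert v {x}) = c
            fin_cases c <;> simp
          simp only [mem_union, hN, mem_filter]
          rcases h3 with h | h | h
          · exact Or.inl (Or.inl ⟨hx, h⟩)
          · exact Or.inl (Or.inr ⟨hx, h⟩)
          · exact Or.inr ⟨hx, h⟩
        have hcc := card_le_card hsub
        have h01 := card_union_le (N 0) (N 1)
        have h012 := card_union_le (N 0 ∪ N 1) (N 2)
        have hc0 := hc 0; have hc1 := hc 1; have hc2 := hc 2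
        omega
      obtain ⟨i, hi⟩ := hex
      obtain ⟨j, S, hSsub, hScard, hSmono⟩ := hP i α (N i) χ hi
      by_cases hji : j = i
      · subst hji
        have hvS : v ∉ S := fun h => (notMem_erase v V) (hNW j (hSsub h))
        refine ⟨j, insert v S, ?_, ?_, ?_⟩
        · exact insert_subset hv ((hSsub.trans (hNW j)).trans (erase_subset _ _))
        · rw [card_insert_of_notMem hvS, hScard, Function.update_self]
          have := h0 j; omega
        · intro e he hec
          by_cases hve : v ∈ e
          · have hsub2 : e.erase v ⊆ S := by
              intro x hx
              rcases mem_insert.mp (he (mem_of_mem_erase hx)) with h | h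
              · exact absurd h (ne_of_mem_erase hx)
              · exact h
            have hc1 : (e.erase v).card = 1 := by rw [card_erase_of_mem hve, hec]
            obtain ⟨x, hx⟩ := card_eq_one.mp hc1
            have hxS : x ∈ S := hsub2 (hx ▸ mem_singleton_self x)
            have hcol : χ (insert v {x}) = j := (mem_filter.mp (hSsub hxS)).2
            have he' : insert v {x} = e := by rw [← hx, insert_erase hve]
            rw [← he']; exact hcol
          · refine hSmono e ?_ hec
            intro x hx
            rcases mem_insert.mp (he hx) with h | h
            · exact absurd (h ▸ hx) hve
            · exact h
      · refine ⟨j, S, (hSsub.trans (hNW i)).trans (erase_subset _ _), ?_, hSmono⟩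
        rw [hScard, Function.update_of_ne hji]

/-- Three-uniform hypergraph Ramsey theorem for 3 colors. -/
lemma ramsey3 : ∀ (n : ℕ) (m : Fin 3 → ℕ), (∑ i, m i) ≤ n →
    ∃ p : ℕ, ∀ (α : Type) [DecidableEq α] (V : Finset α) (ψ : Finset α → Fin 3),
      p ≤ V.card → ∃ i : Fin 3, ∃ S : Finset α, S ⊆ V ∧ S.card = m i ∧
        ∀ e : Finset α, e ⊆ S → e.card = 3 → ψ e = i := by
  intro n
  induction n with
  | zero =>
    intro m hm
    have hm0 : m 0 = 0 := by
      have := Finset.single_le_sum (f := m) (fun _ _ => Nat.zero_le _) (mem_univ 0)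
      omega
    refine ⟨0, fun α _ V ψ _ => ⟨0, ∅, empty_subset _, by simp [hm0], ?_⟩⟩
    intro e he hec
    rw [Finset.subset_empty.mp he] at hec
    simp at hec
  | succ n IH =>
    intro m hm
    by_cases h0 : ∃ i, m i = 0
    · obtain ⟨i, hi⟩ := h0
      refine ⟨0, fun α _ V ψ _ => ⟨i, ∅, empty_subset _, by simp [hi], ?_⟩⟩
      intro e he hec
      rw [Finset.subset_empty.mp he] at hec
      simp at hec
    · push_neg at h0
      have hsum : ∀ i : Fin 3, (∑ j, Function.update m i (m i - 1) j) ≤ n := by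
        intro i
        have e1 : ∑ j, Function.update m i (m i - 1) j
            = (m i - 1) + ∑ j ∈ Finset.univ \ {i}, m j := by
          rw [Finset.sum_update_of_mem (mem_univ i)]
        have e2 : m i + ∑ j ∈ Finset.univ \ {i}, m j = ∑ j, m j := by
          rw [← Finset.erase_eq]
          exact Finset.add_sum_erase _ _ (mem_univ i)
        have := h0 i
        omega
      have hP : ∀ i : Fin 3, ∃ p : ℕ, ∀ (α : Type) [DecidableEq α] (V : Finset α)
          (ψ : Finset α → Fin 3), p ≤ V.card → ∃ j : Fin 3, ∃ S : Finset α,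
          S ⊆ V ∧ S.card = Function.update m i (m i - 1) j ∧
          ∀ e : Finset α, e ⊆ S → e.card = 3 → ψ e = j :=
        fun i => IH _ (hsum i)
      choose P hP using hP
      obtain ⟨g, hg⟩ := ramsey2 (∑ i, P i) P le_rfl
      refine ⟨g + 1, ?_⟩
      intro α _ V ψ hV
      obtain ⟨v, hv⟩ : V.Nonempty := card_pos.mp (by omega)
      have hWcard : g ≤ (V.erase v).card := by
        rw [card_erase_of_mem hv]; omega
      obtain ⟨i, T, hTsub, hTcard, hTmono⟩ :=
        hg α (V.erase v) (fun e => ψ (insert v e)) hWcard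
      obtain ⟨j, S, hSsub, hScard, hSmono⟩ := hP i α T ψ (le_of_eq hTcard.symm)
      by_cases hji : j = i
      · subst hji
        have hvS : v ∉ S := fun h => (notMem_erase v V) (hTsub (hSsub h))
        refine ⟨j, insert v S, ?_, ?_, ?_⟩
        · exact insert_subset hv ((hSsub.trans hTsub).trans (erase_subset _ _))
        · rw [card_insert_of_notMem hvS, hScard, Function.update_self]
          have := h0 j; omega
        · intro e he hec
          by_cases hve : v ∈ e
          · have hsub2 : e.erase v ⊆ S := by
              intro x hx
              rcases mem_insert.mp (he (mem_of_mem_erase hx)) with h | h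
              · exact absurd h (ne_of_mem_erase hx)
              · exact h
            have hc2 : (e.erase v).card = 2 := by rw [card_erase_of_mem hve, hec]
            have hcol := hTmono (e.erase v) (hsub2.trans hSsub) hc2
            beta_reduce at hcol
            rwa [insert_erase hve] at hcol
          · refine hSmono e ?_ hec
            intro x hx
            rcases mem_insert.mp (he hx) with h | h
            · exact absurd (h ▸ hx) hve
            · exact h
      · refine ⟨j, S, hSsub.trans hTsub |>.trans (erase_subset _ _), ?_, hSmono⟩
        rw [hScard, Function.update_of_ne hji]

/-- Key lemma: if `ψ (insert t P) = χ P` whenever `t` dominates `P`, and `χ` has no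
monochromatic `K_s` in color `i`, then no `(2s-1)`-set has at most one `ψ`-bad triple. -/
lemma lift_key (n s : ℕ) (hs : 3 ≤ s) (χ ψ : Finset (Fin n) → Fin 3) (i : Fin 3)
    (hψ : ∀ (t : Fin n) (P : Finset (Fin n)), (∀ z ∈ P, z < t) → ψ (insert t P) = χ P)
    (hχ : ¬ HasMonoClique n χ 2 i s) (S : Finset (Fin n)) (hS : S.card = 2 * s - 1)
    (hbad : ((S.powersetCard 3).filter (fun e => ψ e ≠ i)).card ≤ 1) : False := by
  have hm : 5 ≤ S.card := by omega
  have hne : S.Nonempty := card_pos.mp (by omega)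
  set w := S.max' hne with hw
  have hwS : w ∈ S := S.max'_mem hne
  have hS₁card : (S.erase w).card = S.card - 1 := card_erase_of_mem hwS
  have hne₁ : (S.erase w).Nonempty := card_pos.mp (by omega)
  set u := (S.erase w).max' hne₁ with hu
  have huS₁ : u ∈ S.erase w := (S.erase w).max'_mem hne₁
  have huS : u ∈ S := mem_of_mem_erase huS₁
  have huw : u < w :=
    lt_of_le_of_ne (S.le_max' u huS) (ne_of_mem_erase huS₁)
  set T := (S.erase w).erase u with hT
  have hTlt : ∀ x ∈ T, x < u := fun x hx =>
    lt_of_le_of_ne ((S.erase w).le_max' x (mem_of_mem_erase hx)) (ne_of_mem_erase hx)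
  have hTS : T ⊆ S := (erase_subset _ _).trans (erase_subset _ _)
  have hTcard : T.card = S.card - 2 := by
    rw [hT, card_erase_of_mem huS₁, hS₁card]; omega
  have hmono : ∀ x ∈ T, ∀ y ∈ T, x ≠ y → χ {x, y} = i := by
    intro x hx y hy hxy
    have hPcard : ({x, y} : Finset (Fin n)).card = 2 := card_pair hxy
    have hPS : ({x, y} : Finset (Fin n)) ⊆ S := by
      intro z hz
      rcases mem_insert.mp hz with rfl | hz
      · exact hTS hx
      · rw [mem_singleton.mp hz]; exact hTS hy
    have hPlt : ∀ z ∈ ({x, y} : Finset (Fin n)), z < u := by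
      intro z hz
      rcases mem_insert.mp hz with rfl | hz
      · exact hTlt _ hx
      · rw [mem_singleton.mp hz]; exact hTlt _ hy
    have hPltw : ∀ z ∈ ({x, y} : Finset (Fin n)), z < w := fun z hz => (hPlt z hz).trans huw
    have key2 : ∀ t : Fin n, t ∈ S → (∀ z ∈ ({x, y} : Finset (Fin n)), z < t) →
        insert t ({x, y} : Finset (Fin n)) ∉
          (S.powersetCard 3).filter (fun e => ψ e ≠ i) → χ {x, y} = i := by
      intro t htS htlt hnot
      have htP : t ∉ ({x, y} : Finset (Fin n)) := fun h => lt_irrefl t (htlt t h)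
      have hmem : insert t ({x, y} : Finset (Fin n)) ∈ S.powersetCard 3 := by
        rw [mem_powersetCard]
        exact ⟨insert_subset htS hPS, by rw [card_insert_of_notMem htP, hPcard]⟩
      have h' : ψ (insert t ({x, y} : Finset (Fin n))) = i :=
        not_not.mp (fun h => hnot (mem_filter.mpr ⟨hmem, h⟩))
      rwa [hψ t _ htlt] at h'
    have hne12 : insert u ({x, y} : Finset (Fin n)) ≠ insert w ({x, y} : Finset (Fin n)) := by
      intro h
      have hwin : w ∈ insert u ({x, y} : Finset (Fin n)) := h ▸ mem_insert_self w _
      rcases mem_insert.mp hwin with h' | h'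
      · exact absurd h'.symm (ne_of_lt huw)
      · exact lt_irrefl w (hPltw w h')
    by_cases h1 : insert u ({x, y} : Finset (Fin n)) ∈
        (S.powersetCard 3).filter (fun e => ψ e ≠ i)
    · have h2 : insert w ({x, y} : Finset (Fin n)) ∉
          (S.powersetCard 3).filter (fun e => ψ e ≠ i) := by
        intro h2
        have hpair : ({insert u ({x, y} : Finset (Fin n)),
            insert w ({x, y} : Finset (Fin n))} : Finset (Finset (Fin n))) ⊆
            (S.powersetCard 3).filter (fun e => ψ e ≠ i) := by
          intro z hz
          rcases mem_insert.mp hz with rfl | hz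
          · exact h1
          · rw [mem_singleton.mp hz]; exact h2
        have := card_le_card hpair
        rw [card_pair hne12] at this
        omega
      exact key2 w hwS hPltw h2
    · exact key2 u huS hPlt h1
  obtain ⟨T', hT'sub, hT'card⟩ := Finset.exists_subset_card_eq (s := T) (n := s) (by omega)
  apply hχ
  refine ⟨T', hT'card, ?_⟩
  intro e he hec
  obtain ⟨x, y, hxy, rfl⟩ := card_eq_two.mp hec
  exact hmono x (hT'sub (he (mem_insert_self _ _))) y
    (hT'sub (he (mem_insert_of_mem (mem_singleton_self _)))) hxy

/-- The order-based lift of a pair coloring to a triple coloring: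
`ψ(e) = χ(e minus its maximum)`. -/
def liftColor {p : ℕ} (χ : Finset (Fin p) → Fin 3) : Finset (Fin p) → Fin 3 :=
  fun e => if h : e.Nonempty then χ (e.erase (e.max' h)) else 0

lemma liftColor_spec {p : ℕ} (χ : Finset (Fin p) → Fin 3) :
    ∀ (t : Fin p) (P : Finset (Fin p)), (∀ z ∈ P, z < t) →
      liftColor χ (insert t P) = χ P := by
  intro t P hlt
  have htP : t ∉ P := fun h => lt_irrefl t (hlt t h)
  have hne : (insert t P).Nonempty := insert_nonempty _ _
  have hmax : (insert t P).max' hne = t := by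
    apply le_antisymm
    · apply Finset.max'_le
      intro z hz
      rcases mem_insert.mp hz with rfl | hz
      · exact le_rfl
      · exact (hlt z hz).le
    · exact Finset.le_max' _ _ (mem_insert_self _ _)
  unfold liftColor
  rw [dif_pos hne, hmax, erase_insert htP]

lemma mono_to_bad {p : ℕ} (ψ : Finset (Fin p) → Fin 3) (i : Fin 3) (S : Finset (Fin p))
    (h : ∀ e : Finset (Fin p), e ⊆ S → e.card = 3 → ψ e = i) :
    ((S.powersetCard 3).filter (fun e => ψ e ≠ i)).card ≤ 1 := by
  have hempty : (S.powersetCard 3).filter (fun e => ψ e ≠ i) = ∅ :=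
    filter_eq_empty_iff.mpr (fun e he => not_not.mpr
      (h e (mem_powersetCard.mp he).1 (mem_powersetCard.mp he).2))
  rw [hempty]
  simp

/-- a 3-coloring of the pairs of an `n`-element set with no
monochromatic `K_{s_i}` in color `i` lifts to a 3-coloring of the triples with
no `K_{2s₁-1}^{(3)} - e` in color 1 and no monochromatic `K_{2s_i-1}^{(3)}` in
colors 2, 3; consequently
`R(K_{2s₁-1}^{(3)} - e, K_{2s₂-1}^{(3)}, K_{2s₃-1}^{(3)}; 3) ≥
R(K_{s₁}, K_{s₂}, K_{s₃}; 2)`. -/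
theorem lift_three_coloring (s₁ s₂ s₃ n : ℕ)
    (hs₁ : 3 ≤ s₁) (hs₂ : 3 ≤ s₂) (hs₃ : 3 ≤ s₃) (hn : 3 ≤ n)
    (χ : Finset (Fin n) → Fin 3)
    (hχ₁ : ¬ HasMonoClique n χ 2 0 s₁)
    (hχ₂ : ¬ HasMonoClique n χ 2 1 s₂)
    (hχ₃ : ¬ HasMonoClique n χ 2 2 s₃) :
    (∃ ψ : Finset (Fin n) → Fin 3,
      ¬ HasCliqueMinusEdge n ψ 0 (2 * s₁ - 1) ∧
      ¬ HasMonoClique n ψ 3 1 (2 * s₂ - 1) ∧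
      ¬ HasMonoClique n ψ 3 2 (2 * s₃ - 1)) ∧
    RGraph3 s₁ s₂ s₃ ≤ RHyp3 s₁ s₂ s₃ := by
  constructor
  · refine ⟨liftColor χ, ?_, ?_, ?_⟩
    · intro h
      unfold HasCliqueMinusEdge at h
      obtain ⟨S, h1, h2⟩ := h
      exact lift_key n s₁ hs₁ χ (liftColor χ) 0 (liftColor_spec χ) hχ₁ S h1 h2
    · intro h
      unfold HasMonoClique at h
      obtain ⟨S, h1, h2⟩ := h
      exact lift_key n s₂ hs₂ χ (liftColor χ) 1 (liftColor_spec χ) hχ₂ S h1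
        (mono_to_bad _ 1 S h2)
    · intro h
      unfold HasMonoClique at h
      obtain ⟨S, h1, h2⟩ := h
      exact lift_key n s₃ hs₃ χ (liftColor χ) 2 (liftColor_spec χ) hχ₃ S h1
        (mono_to_bad _ 2 S h2)
  · -- the Ramsey number inequality
    have hBA : ∀ p : ℕ, p ∈ {p | 0 < p ∧ ∀ ψ : Finset (Fin p) → Fin 3,
        HasCliqueMinusEdge p ψ 0 (2 * s₁ - 1) ∨
          HasMonoClique p ψ 3 1 (2 * s₂ - 1) ∨
            HasMonoClique p ψ 3 2 (2 * s₃ - 1)} →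
        p ∈ {p | 0 < p ∧ ∀ χ : Finset (Fin p) → Fin 3,
        HasMonoClique p χ 2 0 s₁ ∨ HasMonoClique p χ 2 1 s₂ ∨
          HasMonoClique p χ 2 2 s₃} := by
      rintro p ⟨hp, hps⟩
      refine ⟨hp, fun χ' => ?_⟩
      by_contra hcon
      push_neg at hcon
      obtain ⟨hc1, hc2, hc3⟩ := hcon
      rcases hps (liftColor χ') with h | h | h
      · unfold HasCliqueMinusEdge at h
        obtain ⟨S, h1, h2⟩ := h
        exact lift_key p s₁ hs₁ χ' (liftColor χ') 0 (liftColor_spec χ') hc1 S h1 h2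
      · unfold HasMonoClique at h
        obtain ⟨S, h1, h2⟩ := h
        exact lift_key p s₂ hs₂ χ' (liftColor χ') 1 (liftColor_spec χ') hc2 S h1
          (mono_to_bad _ 1 S h2)
      · unfold HasMonoClique at h
        obtain ⟨S, h1, h2⟩ := h
        exact lift_key p s₃ hs₃ χ' (liftColor χ') 2 (liftColor_spec χ') hc3 S h1
          (mono_to_bad _ 2 S h2)
    have hBne : ∃ p : ℕ, p ∈ {p | 0 < p ∧ ∀ ψ : Finset (Fin p) → Fin 3,
        HasCliqueMinusEdge p ψ 0 (2 * s₁ - 1) ∨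
          HasMonoClique p ψ 3 1 (2 * s₂ - 1) ∨
            HasMonoClique p ψ 3 2 (2 * s₃ - 1)} := by
      obtain ⟨g, hg⟩ := ramsey3 ((2 * s₁ - 1) + (2 * s₂ - 1) + (2 * s₃ - 1))
        ![2 * s₁ - 1, 2 * s₂ - 1, 2 * s₃ - 1]
        (by rw [Fin.sum_univ_three]; simp)
      refine ⟨g + 1, Nat.succ_pos g, fun ψ => ?_⟩
      obtain ⟨i, S, hsub, hcard, hmono⟩ := hg (Fin (g + 1)) Finset.univ ψ
        (by rw [card_univ, Fintype.card_fin]; omega)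
      fin_cases i
      · refine Or.inl ⟨S, by simpa using hcard, ?_⟩
        exact mono_to_bad _ 0 S hmono
      · exact Or.inr (Or.inl ⟨S, by simpa using hcard, hmono⟩)
      · exact Or.inr (Or.inr ⟨S, by simpa using hcard, hmono⟩)
    unfold RGraph3 RHyp3
    exact Nat.sInf_le (hBA _ (Nat.sInf_mem hBne))
end

section
/- Let q ≥ 3 and s₁, s₂, s₃ ≥ 3, and let p ≥ 3. Suppose there exists a 3-coloring χ of the 2-element subsets of a p-element vertex set with colors {1, 2, 3} such that for each i ∈ {1, 2, 3} there is no s_i-element vertex set all of whose 2-element subsets receive color i. Then there exists a 5-coloring ψ of the 3-element subsets of a (q·p)-element vertex set with colors {1, 2, 3, 4, 5} such that: there is no (2s₁−1)-element vertex set all but at most one of whose 3-element subsets receive color 1; there is no (2s₂−1)-element vertex set all of whose 3-element subsets receive color 2; there is no (2s₃−1)-element vertex set all of whose 3-element subsets receive color 3; there is no 5-element vertex set all of whose 3-element subsets receive color 4; and there is no (q+1)-element vertex set all but at most one of whose 3-element subsets receive color 5. Consequently, R(K_{2s₁−1}^{(3)} − e, K_{2s₂−1}^{(3)}, K_{2s₃−1}^{(3)},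 K_5^{(3)}, K_{q+1}^{(3)} − e; 3) > q·(R(K_{s₁}, K_{s₂}, K_{s₃}; 2) − 1). -/
/-- The 5-color hypergraph Ramsey number
`R(K_{2s₁-1}^{(3)} - e, K_{2s₂-1}^{(3)}, K_{2s₃-1}^{(3)}, K_5^{(3)},
K_{q+1}^{(3)} - e; 3)`. -/
noncomputable def RHyp5 (s₁ s₂ s₃ q : ℕ) : ℕ :=
  sInf {p | 0 < p ∧ ∀ ψ : Finset (Fin p) → Fin 5,
    HasCliqueMinusEdge p ψ 0 (2 * s₁ - 1) ∨
      HasMonoClique p ψ 3 1 (2 * s₂ - 1) ∨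
        HasMonoClique p ψ 3 2 (2 * s₃ - 1) ∨
          HasMonoClique p ψ 3 3 5 ∨
            HasCliqueMinusEdge p ψ 4 (q + 1)}

open Finset

private lemma pigeon5 (A : Finset ℕ) (f : ℕ → Fin 5) (N : Fin 5 → ℕ)
    (h : ∑ c, N c ≤ A.card) :
    ∃ c, N c ≤ (A.filter (fun x => f x = c)).card := by
  by_contra hcon
  push_neg at hcon
  have hsum : A.card = ∑ c, (A.filter (fun x => f x = c)).card :=
    Finset.card_eq_sum_card_fiberwise (fun x _ => Finset.mem_univ (f x))
  have : ∑ c, ((A.filter (fun x => f x = c)).card + 1) ≤ ∑ c, N c := by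
    apply Finset.sum_le_sum
    intro c _
    exact hcon c
  rw [Finset.sum_add_distrib] at this
  simp at this
  omega

private lemma graphRamsey (m : Fin 5 → ℕ) :
    ∃ N : ℕ, ∀ (A : Finset ℕ) (f : Finset ℕ → Fin 5), N ≤ A.card →
      ∃ c : Fin 5, ∃ B ⊆ A, m c ≤ B.card ∧
        ∀ x ∈ B, ∀ y ∈ B, x ≠ y → f {x, y} = c := by
  suffices H : ∀ n (m : Fin 5 → ℕ), ∑ c, m c = n →
      ∃ N : ℕ, ∀ (A : Finset ℕ) (f : Finset ℕ → Fin 5), N ≤ A.card →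
      ∃ c : Fin 5, ∃ B ⊆ A, m c ≤ B.card ∧
        ∀ x ∈ B, ∀ y ∈ B, x ≠ y → f {x, y} = c from H _ m rfl
  intro n
  induction n using Nat.strong_induction_on with
  | _ n ih =>
    intro m hm
    by_cases h0 : ∃ c, m c = 0
    · obtain ⟨c, hc⟩ := h0
      exact ⟨0, fun A f _ => ⟨c, ∅, Finset.empty_subset A, by simp [hc], by simp⟩⟩
    · push_neg at h0
      have hpos : ∀ c, 1 ≤ m c := fun c => Nat.one_le_iff_ne_zero.mpr (h0 c)
      have key : ∀ c : Fin 5, ∃ N : ℕ, ∀ (A : Finset ℕ) (f : Finset ℕ → Fin 5), N ≤ A.card →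
          ∃ c' : Fin 5, ∃ B ⊆ A, (Function.update m c (m c - 1)) c' ≤ B.card ∧
            ∀ x ∈ B, ∀ y ∈ B, x ≠ y → f {x, y} = c' := by
        intro c
        apply ih (n - 1) _ _ ?_
        · have : 1 ≤ n := by
            rw [← hm]; calc 1 ≤ m c := hpos c
            _ ≤ ∑ c, m c := Finset.single_le_sum (fun _ _ => Nat.zero_le _) (mem_univ c)
          omega
        · rw [← hm]
          rw [← Finset.sum_erase_add _ _ (mem_univ c), ← Finset.sum_erase_add _ _ (mem_univ c)]
          have h1 : ∑ x ∈ univ.erase c, Function.update m c (m c - 1) x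
              = ∑ x ∈ univ.erase c, m x := by
            apply Finset.sum_congr rfl
            intro x hx
            rw [Function.update_of_ne (Finset.ne_of_mem_erase hx)]
          rw [h1, Function.update_self]
          have := hpos c
          omega
      choose N hN using key
      refine ⟨(∑ c, N c) + 1, ?_⟩
      intro A f hA
      have hAne : A.Nonempty := Finset.card_pos.mp (by omega)
      obtain ⟨v, hv⟩ := hAne
      set A' := A.erase v with hA'
      have hA'card : (∑ c, N c) ≤ A'.card := by
        rw [hA', Finset.card_erase_of_mem hv]; omega
      obtain ⟨c, hc⟩ := pigeon5 A' (fun x => f {v, x}) N hA'card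
      set Ac := A'.filter (fun x => f {v, x} = c) with hAc
      obtain ⟨c', B', hB'sub, hB'card, hB'mono⟩ := hN c Ac f hc
      by_cases hcc : c' = c
      · subst hcc
        refine ⟨c', insert v B', ?_, ?_, ?_⟩
        · apply Finset.insert_subset hv
          exact hB'sub.trans ((Finset.filter_subset _ _).trans (Finset.erase_subset _ _))
        · have hvB' : v ∉ B' := by
            intro hmem
            have := hB'sub hmem
            rw [hAc] at this
            exact (Finset.notMem_erase v A) (Finset.mem_of_mem_filter _ this)
          rw [Finset.card_insert_of_notMem hvB']
          rw [Function.update_self] at hB'card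
          have := hpos c'
          omega
        · intro x hx y hy hxy
          rcases Finset.mem_insert.mp hx with rfl | hx'
          · rcases Finset.mem_insert.mp hy with rfl | hy'
            · exact absurd rfl hxy
            · have := hB'sub hy'
              rw [hAc, Finset.mem_filter] at this
              exact this.2
          · rcases Finset.mem_insert.mp hy with rfl | hy'
            · have := hB'sub hx'
              rw [hAc, Finset.mem_filter] at this
              rw [show ({x, y} : Finset ℕ) = {y, x} by rw [Finset.pair_comm]]
              exact this.2
            · exact hB'mono x hx' y hy' hxy
      · refine ⟨c', B', ?_, ?_, hB'mono⟩
        · exact hB'sub.trans ((Finset.filter_subset _ _).trans (Finset.erase_subset _ _))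
        · rwa [Function.update_of_ne hcc] at hB'card

private lemma hypRamsey (m : Fin 5 → ℕ) :
    ∃ N : ℕ, ∀ (A : Finset ℕ) (f : Finset ℕ → Fin 5), N ≤ A.card →
      ∃ c : Fin 5, ∃ B ⊆ A, m c ≤ B.card ∧
        ∀ e ⊆ B, e.card = 3 → f e = c := by
  suffices H : ∀ n (m : Fin 5 → ℕ), ∑ c, m c = n →
      ∃ N : ℕ, ∀ (A : Finset ℕ) (f : Finset ℕ → Fin 5), N ≤ A.card →
      ∃ c : Fin 5, ∃ B ⊆ A, m c ≤ B.card ∧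
        ∀ e ⊆ B, e.card = 3 → f e = c from H _ m rfl
  intro n
  induction n using Nat.strong_induction_on with
  | _ n ih =>
    intro m hm
    by_cases h0 : ∃ c, m c ≤ 2
    · obtain ⟨c, hc⟩ := h0
      refine ⟨2, fun A f hA => ?_⟩
      obtain ⟨B, hBsub, hBcard⟩ := Finset.exists_subset_card_eq (le_trans hc hA)
      refine ⟨c, B, hBsub, le_of_eq hBcard.symm, ?_⟩
      intro e he hecard
      exfalso
      have := Finset.card_le_card he
      omega
    · push_neg at h0
      have hpos : ∀ c, 3 ≤ m c := fun c => (h0 c)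
      have key : ∀ c : Fin 5, ∃ N : ℕ, ∀ (A : Finset ℕ) (f : Finset ℕ → Fin 5), N ≤ A.card →
          ∃ c' : Fin 5, ∃ B ⊆ A, (Function.update m c (m c - 1)) c' ≤ B.card ∧
            ∀ e ⊆ B, e.card = 3 → f e = c' := by
        intro c
        apply ih (n - 1) _ _ ?_
        · have : 1 ≤ n := by
            rw [← hm]; calc 1 ≤ m c := by have := hpos c; omega
            _ ≤ ∑ c, m c := Finset.single_le_sum (fun _ _ => Nat.zero_le _) (mem_univ c)
          omega
        · rw [← hm]
          rw [← Finset.sum_erase_add _ _ (mem_univ c), ← Finset.sum_erase_add _ _ (mem_univ c)]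
          have h1 : ∑ x ∈ univ.erase c, Function.update m c (m c - 1) x
              = ∑ x ∈ univ.erase c, m x := by
            apply Finset.sum_congr rfl
            intro x hx
            rw [Function.update_of_ne (Finset.ne_of_mem_erase hx)]
          rw [h1, Function.update_self]
          have := hpos c
          omega
      choose NH hNH using key
      obtain ⟨NG, hNG⟩ := graphRamsey NH
      refine ⟨NG + 1, ?_⟩
      intro A f hA
      have hAne : A.Nonempty := Finset.card_pos.mp (by omega)
      obtain ⟨v, hv⟩ := hAne
      set A' := A.erase v with hA'
      have hA'card : NG ≤ A'.card := by
        rw [hA', Finset.card_erase_of_mem hv]; omega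
      obtain ⟨c, B, hBsub, hBcard, hBmono⟩ := hNG A' (fun e => f (insert v e)) hA'card
      obtain ⟨c', B', hB'sub, hB'card, hB'mono⟩ := hNH c B f hBcard
      by_cases hcc : c' = c
      · subst hcc
        have hvB' : v ∉ B' := by
          intro hmem
          exact (Finset.notMem_erase v A) (hBsub (hB'sub hmem))
        refine ⟨c', insert v B', ?_, ?_, ?_⟩
        · exact Finset.insert_subset hv ((hB'sub.trans hBsub).trans (Finset.erase_subset _ _))
        · rw [Finset.card_insert_of_notMem hvB']
          rw [Function.update_self] at hB'card
          have := hpos c'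
          omega
        · intro e he hecard
          by_cases hve : v ∈ e
          · have hesub : e.erase v ⊆ B' := by
              intro x hx
              have hxe := Finset.mem_of_mem_erase hx
              rcases Finset.mem_insert.mp (he hxe) with rfl | h
              · exact absurd rfl (Finset.ne_of_mem_erase hx)
              · exact h
            have hecard' : (e.erase v).card = 2 := by
              rw [Finset.card_erase_of_mem hve, hecard]
            obtain ⟨x, y, hxy, hexy⟩ := Finset.card_eq_two.mp hecard'
            have hx : x ∈ B' := hesub (hexy ▸ Finset.mem_insert_self x {y})
            have hy : y ∈ B' := hesub (hexy ▸ Finset.mem_insert_of_mem (Finset.mem_singleton_self y))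
            have : e = insert v {x, y} := by
              rw [← hexy, Finset.insert_erase hve]
            rw [this]
            exact hBmono x (hB'sub hx) y (hB'sub hy) hxy
          · have : e ⊆ B' := fun x hx => by
              rcases Finset.mem_insert.mp (he hx) with rfl | h
              · exact absurd hx hve
              · exact h
            exact hB'mono e this hecard
      · refine ⟨c', B', ?_, ?_, hB'mono⟩
        · exact (hB'sub.trans hBsub).trans (Finset.erase_subset _ _)
        · rwa [Function.update_of_ne hcc] at hB'card

private lemma hypRamseyFin (M : ℕ) :
    ∃ n : ℕ, 0 < n ∧ ∀ ψ : Finset (Fin n) → Fin 5,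
      ∃ c : Fin 5, ∃ S : Finset (Fin n), S.card = M ∧
        ∀ e ⊆ S, e.card = 3 → ψ e = c := by
  obtain ⟨N, hN⟩ := hypRamsey (fun _ => M)
  refine ⟨N + 1, Nat.succ_pos N, ?_⟩
  intro ψ
  set emb : ℕ → Fin (N + 1) := fun x => if h : x < N + 1 then ⟨x, h⟩ else 0 with hemb
  set f : Finset ℕ → Fin 5 := fun e => ψ (e.image emb) with hf
  have hcard : N ≤ (Finset.range (N + 1)).card := by simp
  obtain ⟨c, B, hBsub, hBcard, hBmono⟩ := hN (Finset.range (N + 1)) f hcard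
  obtain ⟨B', hB'sub, hB'card⟩ := Finset.exists_subset_card_eq hBcard
  have hBlt : ∀ x ∈ B', x < N + 1 := fun x hx => Finset.mem_range.mp (hBsub (hB'sub hx))
  refine ⟨c, B'.attachFin hBlt, by rw [Finset.card_attachFin, hB'card], ?_⟩
  intro e he hecard
  set e' : Finset ℕ := e.image Fin.val with he'
  have he'sub : e' ⊆ B' := by
    intro x hx
    rw [he', Finset.mem_image] at hx
    obtain ⟨a, ha, rfl⟩ := hx
    have := he ha
    rwa [Finset.mem_attachFin] at this
  have he'card : e'.card = 3 := by
    rw [he', Finset.card_image_of_injective _ Fin.val_injective, hecard]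
  have himg : e'.image emb = e := by
    rw [he', Finset.image_image]
    have hid : ∀ a ∈ e, (emb ∘ Fin.val) a = a := by
      intro a _
      simp only [Function.comp, hemb]
      rw [dif_pos a.isLt]
    rw [Finset.image_congr (fun a ha => hid a ha)]
    exact Finset.image_id
  have hres := hBmono e' (he'sub.trans hB'sub) he'card
  rw [hf] at hres
  simp only at hres
  rw [himg] at hres
  exact hres

section Construction

variable (q p : ℕ) (χ : Finset (Fin p) → Fin 3)

private def grp (v : Fin (q * p)) : Fin p := (finProdFinEquiv.symm v).2
private def crd (v : Fin (q * p)) : Fin q := (finProdFinEquiv.symm v).1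

private lemma grp_crd_inj {v w : Fin (q * p)} (h1 : grp q p v = grp q p w)
    (h2 : crd q p v = crd q p w) : v = w := by
  have : finProdFinEquiv.symm v = finProdFinEquiv.symm w := Prod.ext h2 h1
  exact finProdFinEquiv.symm.injective this

/-- the "majority" function on triangles -/
private def F (u v w : Fin 3) : Fin 5 :=
  if u = 0 ∧ v = 0 ∧ w = 0 then 0
  else if (u = 1 ∧ v = 1) ∨ (u = 1 ∧ w = 1) ∨ (v = 1 ∧ w = 1) then 1
  else if (u = 2 ∧ v = 2) ∨ (u = 2 ∧ w = 2) ∨ (v = 2 ∧ w = 2) then 2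
  else 3

private def cst (a : Fin 3) : Fin 5 := Fin.castLE (by omega) a

private def ψdef (e : Finset (Fin (q * p))) : Fin 5 :=
  let G := e.image (grp q p)
  if G.card ≤ 1 then 4
  else if G.card = 2 then
    (if ∃ u ∈ e, ∃ w ∈ e, u ≠ w ∧ crd q p u = crd q p w then cst (χ G) else 4)
  else
    if ∀ P ∈ G.powersetCard 2, χ P = 0 then 0
    else if 2 ≤ ((G.powersetCard 2).filter fun P => χ P = 1).card then 1
    else if 2 ≤ ((G.powersetCard 2).filter fun P => χ P = 2).card then 2
    else 3

-- small decidable facts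
private lemma cst_ne_three (a : Fin 3) : cst a ≠ 3 := by fin_cases a <;> decide
private lemma cst_ne_four (a : Fin 3) : cst a ≠ 4 := by fin_cases a <;> decide
private lemma cst_inj {a b : Fin 3} (h : cst a = cst b) : a = b := by
  fin_cases a <;> fin_cases b <;> simp_all <;> exact absurd h (by decide)

private lemma card3 {α : Type*} [DecidableEq α] {x y z : α} (hxy : x ≠ y) (hxz : x ≠ z)
    (hyz : y ≠ z) : ({x, y, z} : Finset α).card = 3 := by
  rw [Finset.card_insert_of_notMem (by simp [hxy, hxz]),
      Finset.card_insert_of_notMem (by simp [hyz]), Finset.card_singleton]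

private lemma pairs_of_triple {α : Type*} [DecidableEq α] {a b c : α} (hab : a ≠ b)
    (hac : a ≠ c) (hbc : b ≠ c) :
    ({a, b, c} : Finset α).powersetCard 2 = {{a, b}, {a, c}, {b, c}} := by
  ext P
  simp only [Finset.mem_powersetCard, Finset.mem_insert, Finset.mem_singleton]
  constructor
  · rintro ⟨hsub, hcard⟩
    obtain ⟨u, v, huv, rfl⟩ := Finset.card_eq_two.mp hcard
    have hu : u ∈ ({a, b, c} : Finset α) := hsub (by simp)
    have hv : v ∈ ({a, b, c} : Finset α) := hsub (by simp)
    simp only [Finset.mem_insert, Finset.mem_singleton] at hu hv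
    rcases hu with rfl | rfl | rfl <;> rcases hv with rfl | rfl | rfl <;>
      first
        | exact absurd rfl huv
        | simp [Finset.pair_comm]
  · rintro (rfl | rfl | rfl)
    · exact ⟨by intro x hx; simp at hx; rcases hx with rfl | rfl <;> simp,
        Finset.card_pair hab⟩
    · exact ⟨by intro x hx; simp at hx; rcases hx with rfl | rfl <;> simp,
        Finset.card_pair hac⟩
    · exact ⟨by intro x hx; simp at hx; rcases hx with rfl | rfl <;> simp,
        Finset.card_pair hbc⟩

/-- Bridge: all three vertices in the same group. -/
private lemma psi_one {x y z : Fin (q * p)} (hxy : grp q p x = grp q p y)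
    (hxz : grp q p x = grp q p z) : ψdef q p χ {x, y, z} = 4 := by
  have himg : ({x, y, z} : Finset (Fin (q * p))).image (grp q p) = {grp q p x} := by
    ext a
    simp [← hxy, ← hxz]
    try tauto
  unfold ψdef
  rw [himg]
  rw [if_pos (by simp)]

/-- Bridge: two vertices in one group, one in another. -/
private lemma psi_two {x y z : Fin (q * p)} (hxy : x ≠ y) (hg : grp q p x = grp q p y)
    (hgz : grp q p x ≠ grp q p z) :
    ψdef q p χ {x, y, z} =
      (if crd q p z = crd q p x ∨ crd q p z = crd q p y
        then cst (χ {grp q p x, grp q p z}) else 4) := by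
  have himg : ({x, y, z} : Finset (Fin (q * p))).image (grp q p)
      = {grp q p x, grp q p z} := by
    ext a
    simp [← hg]
    try tauto
  have hcard : ({grp q p x, grp q p z} : Finset (Fin p)).card = 2 :=
    Finset.card_pair hgz
  have hsafe : (∃ u ∈ ({x, y, z} : Finset (Fin (q * p))), ∃ w ∈ ({x, y, z} : Finset (Fin (q * p))),
      u ≠ w ∧ crd q p u = crd q p w) ↔ (crd q p z = crd q p x ∨ crd q p z = crd q p y) := by
    constructor
    · rintro ⟨u, hu, w, hw, huw, hcrd⟩
      simp only [Finset.mem_insert, Finset.mem_singleton] at hu hw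
      have hcx : crd q p x ≠ crd q p y := by
        intro h
        exact hxy (grp_crd_inj q p hg h)
      rcases hu with rfl | rfl | rfl <;> rcases hw with rfl | rfl | rfl <;>
        first
          | exact absurd rfl huw
          | exact absurd hcrd hcx
          | exact absurd hcrd.symm hcx
          | (left; exact hcrd.symm)
          | (left; exact hcrd)
          | (right; exact hcrd.symm)
          | (right; exact hcrd)
    · rintro (h | h)
      · exact ⟨z, by simp, x, by simp, fun hzx => hgz (by rw [hzx]), h⟩
      · refine ⟨z, by simp, y, by simp, fun hzy => ?_, h⟩
        rw [hg] at hgz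
        exact hgz (by rw [hzy])
  unfold ψdef
  rw [himg]
  rw [if_neg (by rw [hcard]; omega), if_pos hcard]
  exact if_congr hsafe rfl rfl

/-- Bridge: three vertices in three distinct groups. -/
private lemma psi_three {x y z : Fin (q * p)} (hab : grp q p x ≠ grp q p y)
    (hac : grp q p x ≠ grp q p z) (hbc : grp q p y ≠ grp q p z) :
    ψdef q p χ {x, y, z} =
      F (χ {grp q p x, grp q p y}) (χ {grp q p x, grp q p z}) (χ {grp q p y, grp q p z}) := by
  have himg : ({x, y, z} : Finset (Fin (q * p))).image (grp q p)
      = {grp q p x, grp q p y, grp q p z} := by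
    ext a
    simp
    try tauto
  have hcard : ({grp q p x, grp q p y, grp q p z} : Finset (Fin p)).card = 3 :=
    card3 hab hac hbc
  have hpairs := pairs_of_triple hab hac hbc
  set A := ({grp q p x, grp q p y} : Finset (Fin p)) with hA
  set B := ({grp q p x, grp q p z} : Finset (Fin p)) with hB
  set C := ({grp q p y, grp q p z} : Finset (Fin p)) with hC
  have hAB : A ≠ B := by
    intro h
    have hy : grp q p y ∈ A := by rw [hA]; simp
    rw [h, hB] at hy
    rw [Finset.mem_insert, Finset.mem_singleton] at hy
    rcases hy with h' | h'
    · exact hab h'.symm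
    · exact hbc h'
  have hAC : A ≠ C := by
    intro h
    have hy : grp q p x ∈ A := by rw [hA]; simp
    rw [h, hC] at hy
    rw [Finset.mem_insert, Finset.mem_singleton] at hy
    rcases hy with h' | h'
    · exact hab h'
    · exact hac h'
  have hBC : B ≠ C := by
    intro h
    have hy : grp q p x ∈ B := by rw [hB]; simp
    rw [h, hC] at hy
    rw [Finset.mem_insert, Finset.mem_singleton] at hy
    rcases hy with h' | h'
    · exact hab h'
    · exact hac h'
  have hall : (∀ P ∈ ({A, B, C} : Finset (Finset (Fin p))), χ P = 0)
      ↔ (χ A = 0 ∧ χ B = 0 ∧ χ C = 0) := by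
    simp
  have hcnt : ∀ (c : Fin 3), (({A, B, C} : Finset (Finset (Fin p))).filter
      fun P => χ P = c).card = (if χ A = c then 1 else 0) + (if χ B = c then 1 else 0)
        + (if χ C = c then 1 else 0) := by
    intro c
    rw [show ({A, B, C} : Finset (Finset (Fin p))) = insert A (insert B {C}) from rfl]
    rw [Finset.filter_insert, Finset.filter_insert, Finset.filter_singleton]
    have hmemB : A ∉ insert B ({C} : Finset (Finset (Fin p))) := by
      simp [hAB, hAC]
    have hmemC : B ∉ ({C} : Finset (Finset (Fin p))) := by
      simp [hBC]
    split_ifs with h1 h2 h3 <;>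
      simp_all [Finset.card_insert_of_notMem, Finset.mem_insert, Finset.mem_singleton]
  have key : ∀ a b c : Fin 3,
      (if a = 0 ∧ b = 0 ∧ c = 0 then (0 : Fin 5)
       else if 2 ≤ ((if a = 1 then 1 else 0) + (if b = 1 then 1 else 0)
          + (if c = 1 then 1 else 0) : ℕ) then 1
       else if 2 ≤ ((if a = 2 then 1 else 0) + (if b = 2 then 1 else 0)
          + (if c = 2 then 1 else 0) : ℕ) then 2
       else 3) = F a b c := by decide
  unfold ψdef
  rw [himg]
  rw [if_neg (by rw [hcard]; omega), if_neg (by rw [hcard]; omega)]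
  rw [hpairs]
  simp only [hall, hcnt]
  exact key (χ A) (χ B) (χ C)


private lemma ne_of_mem_notmem {α : Type*} {s t : Finset α} {a : α} (h : a ∈ s)
    (h2 : a ∉ t) : s ≠ t := fun he => h2 (he ▸ h)

private lemma atmostone {S : Finset (Fin (q * p))} {i : Fin 5}
    (h : ((S.powersetCard 3).filter (fun e => ψdef q p χ e ≠ i)).card ≤ 1)
    {e1 e2 : Finset (Fin (q * p))} (h1s : e1 ⊆ S) (h1c : e1.card = 3)
    (h1b : ψdef q p χ e1 ≠ i) (h2s : e2 ⊆ S) (h2c : e2.card = 3)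
    (h2b : ψdef q p χ e2 ≠ i) : e1 = e2 := by
  by_contra hne
  have m1 : e1 ∈ (S.powersetCard 3).filter (fun e => ψdef q p χ e ≠ i) :=
    Finset.mem_filter.mpr ⟨Finset.mem_powersetCard.mpr ⟨h1s, h1c⟩, h1b⟩
  have m2 : e2 ∈ (S.powersetCard 3).filter (fun e => ψdef q p χ e ≠ i) :=
    Finset.mem_filter.mpr ⟨Finset.mem_powersetCard.mpr ⟨h2s, h2c⟩, h2b⟩
  have hsub : ({e1, e2} : Finset (Finset (Fin (q * p)))) ⊆
      (S.powersetCard 3).filter (fun e => ψdef q p χ e ≠ i) := by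
    intro e he
    rcases Finset.mem_insert.mp he with rfl | he'
    · exact m1
    · rw [Finset.mem_singleton] at he'
      exact he' ▸ m2
  have := Finset.card_le_card hsub
  rw [Finset.card_pair hne] at this
  omega

private lemma rep {S : Finset (Fin (q * p))} {g : Fin p}
    (hg : g ∈ S.image (grp q p)) : ∃ x ∈ S, grp q p x = g := by
  rw [Finset.mem_image] at hg
  obtain ⟨x, hx, hgx⟩ := hg
  exact ⟨x, hx, hgx⟩

private lemma sum_mult (S : Finset (Fin (q * p))) :
    S.card = ∑ g ∈ S.image (grp q p), (S.filter (fun v => grp q p v = g)).card :=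
  Finset.card_eq_sum_card_fiberwise (fun x hx => Finset.mem_image_of_mem _ hx)

private lemma mult_pos {S : Finset (Fin (q * p))} {g : Fin p}
    (hg : g ∈ S.image (grp q p)) : 1 ≤ (S.filter (fun v => grp q p v = g)).card := by
  obtain ⟨x, hx, hgx⟩ := rep q p hg
  exact Finset.card_pos.mpr ⟨x, Finset.mem_filter.mpr ⟨hx, hgx⟩⟩

private lemma fiber_extract2 {S : Finset (Fin (q * p))} {g : Fin p}
    (h : 2 ≤ (S.filter (fun v => grp q p v = g)).card) :
    ∃ x y, x ∈ S ∧ y ∈ S ∧ x ≠ y ∧ grp q p x = g ∧ grp q p y = g := by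
  obtain ⟨T, hT, hTcard⟩ := Finset.exists_subset_card_eq h
  obtain ⟨x, y, hxy, rfl⟩ := Finset.card_eq_two.mp hTcard
  have hx := Finset.mem_filter.mp (hT (by simp : x ∈ ({x, y} : Finset (Fin (q*p)))))
  have hy := Finset.mem_filter.mp (hT (by simp : y ∈ ({x, y} : Finset (Fin (q*p)))))
  exact ⟨x, y, hx.1, hy.1, hxy, hx.2, hy.2⟩

private lemma fiber_extract3 {S : Finset (Fin (q * p))} {g : Fin p}
    (h : 3 ≤ (S.filter (fun v => grp q p v = g)).card) :
    ∃ x y z, x ∈ S ∧ y ∈ S ∧ z ∈ S ∧ x ≠ y ∧ x ≠ z ∧ y ≠ z ∧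
      grp q p x = g ∧ grp q p y = g ∧ grp q p z = g := by
  obtain ⟨T, hT, hTcard⟩ := Finset.exists_subset_card_eq h
  obtain ⟨x, y, z, hxy, hxz, hyz, rfl⟩ := Finset.card_eq_three.mp hTcard
  have hx := Finset.mem_filter.mp (hT (by simp : x ∈ ({x, y, z} : Finset (Fin (q*p)))))
  have hy := Finset.mem_filter.mp (hT (by simp : y ∈ ({x, y, z} : Finset (Fin (q*p)))))
  have hz := Finset.mem_filter.mp (hT (by simp : z ∈ ({x, y, z} : Finset (Fin (q*p)))))
  exact ⟨x, y, z, hx.1, hy.1, hz.1, hxy, hxz, hyz, hx.2, hy.2, hz.2⟩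

private lemma crd_inj_group {S : Finset (Fin (q * p))} {g : Fin p} :
    Set.InjOn (crd q p) ↑(S.filter (fun v => grp q p v = g)) := by
  intro x hx y hy hcrd
  simp only [Finset.coe_filter, Set.mem_setOf_eq] at hx hy
  exact grp_crd_inj q p (hx.2.trans hy.2.symm) hcrd

private lemma sub3 {S : Finset (Fin (q * p))} {x y z : Fin (q * p)} (hx : x ∈ S)
    (hy : y ∈ S) (hz : z ∈ S) : ({x, y, z} : Finset (Fin (q * p))) ⊆ S := by
  intro a ha
  simp only [Finset.mem_insert, Finset.mem_singleton] at ha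
  rcases ha with rfl | rfl | rfl <;> assumption

private lemma F_ne_four (u v w : Fin 3) : F u v w ≠ 4 := by
  unfold F; split_ifs <;> decide

private lemma avoid4 (hq : 3 ≤ q) :
    ¬ HasCliqueMinusEdge (q * p) (ψdef q p χ) 4 (q + 1) := by
  rintro ⟨S, hScard, hSbad⟩
  set G := S.image (grp q p) with hG
  have hSne : S.Nonempty := Finset.card_pos.mp (by omega)
  have hGne : G.Nonempty := hSne.image _
  rcases Nat.lt_or_ge G.card 2 with hGc | hGc
  · -- one group : S.card ≤ q, contradiction
    have hGc1 : G.card = 1 := by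
      have := Finset.card_pos.mpr hGne
      omega
    obtain ⟨g, hg⟩ := Finset.card_eq_one.mp hGc1
    have hall : ∀ v ∈ S, grp q p v = g := by
      intro v hv
      have : grp q p v ∈ G := Finset.mem_image_of_mem _ hv
      rw [hg, Finset.mem_singleton] at this
      exact this
    have : S.card ≤ q := by
      have h1 : S = S.filter (fun v => grp q p v = g) := by
        rw [Finset.filter_eq_self.mpr hall]
      calc S.card = (S.image (crd q p)).card := by
            rw [Finset.card_image_of_injOn]
            intro x hx y hy hcrd
            exact grp_crd_inj q p ((hall x hx).trans (hall y hy).symm) hcrd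
        _ ≤ (Finset.univ : Finset (Fin q)).card := Finset.card_le_univ _
        _ = q := by simp
    omega
  rcases Nat.lt_or_ge G.card 3 with hGc2 | hGc3
  · -- exactly two groups
    have hGc' : G.card = 2 := by omega
    obtain ⟨g, h, hgh, hGeq⟩ := Finset.card_eq_two.mp hGc'
    set Sg := S.filter (fun v => grp q p v = g) with hSg
    set Sh := S.filter (fun v => grp q p v = h) with hSh
    have hcardsum : Sg.card + Sh.card = q + 1 := by
      have := sum_mult q p S
      rw [← hG, hGeq, Finset.sum_pair hgh] at this
      rw [← hSg, ← hSh] at this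
      omega
    have hTg : (Sg.image (crd q p)).card = Sg.card :=
      Finset.card_image_of_injOn (crd_inj_group q p)
    have hTh : (Sh.image (crd q p)).card = Sh.card :=
      Finset.card_image_of_injOn (crd_inj_group q p)
    have hunion : ((Sg.image (crd q p)) ∪ (Sh.image (crd q p))).card ≤ q := by
      calc _ ≤ (Finset.univ : Finset (Fin q)).card := Finset.card_le_univ _
        _ = q := by simp
    have hinter : 1 ≤ ((Sg.image (crd q p)) ∩ (Sh.image (crd q p))).card := by
      have := Finset.card_union_add_card_inter (Sg.image (crd q p)) (Sh.image (crd q p))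
      omega
    obtain ⟨k, hk⟩ := Finset.card_pos.mp (by omega : 0 < ((Sg.image (crd q p)) ∩ (Sh.image (crd q p))).card)
    rw [Finset.mem_inter] at hk
    obtain ⟨xg', hxg', hcg⟩ := Finset.mem_image.mp hk.1
    obtain ⟨xh', hxh', hch⟩ := Finset.mem_image.mp hk.2
    have hxgS := (Finset.mem_filter.mp hxg').1
    have hxgG := (Finset.mem_filter.mp hxg').2
    have hxhS := (Finset.mem_filter.mp hxh').1
    have hxhG := (Finset.mem_filter.mp hxh').2
    have hxgxh : xg' ≠ xh' := by
      intro he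
      rw [he, hxhG] at hxgG
      exact hgh hxgG.symm
    -- find two vertices outside {xg', xh'}
    have hrest : 2 ≤ (S \ {xg', xh'}).card := by
      have h1 : ({xg', xh'} : Finset (Fin (q * p))).card = 2 := Finset.card_pair hxgxh
      have h2 := Finset.le_card_sdiff ({xg', xh'} : Finset (Fin (q * p))) S
      omega
    obtain ⟨T, hTsub, hTcard⟩ := Finset.exists_subset_card_eq hrest
    obtain ⟨u1, u2, hu12, rfl⟩ := Finset.card_eq_two.mp hTcard
    have hu1 := Finset.mem_sdiff.mp (hTsub (by simp : u1 ∈ ({u1, u2} : Finset (Fin (q*p)))))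
    have hu2 := Finset.mem_sdiff.mp (hTsub (by simp : u2 ∈ ({u1, u2} : Finset (Fin (q*p)))))
    simp only [Finset.mem_insert, Finset.mem_singleton, not_or] at hu1 hu2
    -- each u gives a bad triple {xg', xh', u}
    have hbadtriple : ∀ u ∈ S, u ≠ xg' → u ≠ xh' →
        ψdef q p χ {xg', xh', u} ≠ 4 ∧ ({xg', xh', u} : Finset (Fin (q*p))).card = 3 := by
      intro u huS hune1 hune2
      have hgu : grp q p u ∈ G := Finset.mem_image_of_mem _ huS
      rw [hGeq, Finset.mem_insert, Finset.mem_singleton] at hgu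
      have hcard3 : ({xg', xh', u} : Finset (Fin (q*p))).card = 3 :=
        card3 hxgxh (Ne.symm hune1) (Ne.symm hune2)
      rcases hgu with hgu | hgu
      · -- u in group g : triple = {xg', u, xh'}
        have hset : ({xg', xh', u} : Finset (Fin (q*p))) = {xg', u, xh'} := by
          ext t; simp; tauto
        have := psi_two q p χ (x := xg') (y := u) (z := xh') (Ne.symm hune1)
          (by rw [hxgG, hgu]) (by rw [hxgG, hxhG]; exact hgh)
        rw [hset, this, if_pos (Or.inl (hch.trans hcg.symm))]
        exact ⟨cst_ne_four _, by rw [← hset]; exact hcard3⟩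
      · -- u in group h : triple = {xh', u, xg'}
        have hset : ({xg', xh', u} : Finset (Fin (q*p))) = {xh', u, xg'} := by
          ext t; simp; tauto
        have := psi_two q p χ (x := xh') (y := u) (z := xg') (Ne.symm hune2)
          (by rw [hxhG, hgu]) (by rw [hxhG, hxgG]; exact hgh.symm)
        rw [hset, this, if_pos (Or.inl (hcg.trans hch.symm))]
        exact ⟨cst_ne_four _, by rw [← hset]; exact hcard3⟩
    obtain ⟨hb1, hc1⟩ := hbadtriple u1 hu1.1 hu1.2.1 hu1.2.2
    obtain ⟨hb2, hc2⟩ := hbadtriple u2 hu2.1 hu2.2.1 hu2.2.2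
    have heq := atmostone q p χ hSbad (sub3 q p hxgS hxhS hu1.1) hc1 hb1
      (sub3 q p hxgS hxhS hu2.1) hc2 hb2
    have : u1 ∈ ({xg', xh', u2} : Finset (Fin (q*p))) := heq ▸ (by simp)
    simp only [Finset.mem_insert, Finset.mem_singleton] at this
    rcases this with h' | h' | h'
    · exact hu1.2.1 h'
    · exact hu1.2.2 h'
    · exact hu12 h'
  · -- at least three groups
    obtain ⟨T, hTsub, hTcard⟩ := Finset.exists_subset_card_eq hGc3
    obtain ⟨a, b, c, hab, hac, hbc, rfl⟩ := Finset.card_eq_three.mp hTcard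
    obtain ⟨x, hxS, hgx⟩ := rep q p (hTsub (by simp : a ∈ ({a,b,c} : Finset (Fin p))))
    obtain ⟨y, hyS, hgy⟩ := rep q p (hTsub (by simp : b ∈ ({a,b,c} : Finset (Fin p))))
    obtain ⟨z, hzS, hgz⟩ := rep q p (hTsub (by simp : c ∈ ({a,b,c} : Finset (Fin p))))
    have hxy : x ≠ y := fun he => hab (by rw [← hgx, ← hgy, he])
    have hxz : x ≠ z := fun he => hac (by rw [← hgx, ← hgz, he])
    have hyz : y ≠ z := fun he => hbc (by rw [← hgy, ← hgz, he])
    have hb1 : ψdef q p χ {x, y, z} ≠ 4 := by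
      rw [psi_three q p χ (by rw [hgx, hgy]; exact hab) (by rw [hgx, hgz]; exact hac)
        (by rw [hgy, hgz]; exact hbc)]
      exact F_ne_four _ _ _
    have hc1 : ({x, y, z} : Finset (Fin (q*p))).card = 3 := card3 hxy hxz hyz
    -- get a fourth vertex
    have hw : (S \ {x, y, z}).Nonempty := by
      apply Finset.card_pos.mp
      have h2 := Finset.le_card_sdiff ({x, y, z} : Finset (Fin (q * p))) S
      rw [hc1] at h2
      omega
    obtain ⟨w, hw⟩ := hw
    rw [Finset.mem_sdiff] at hw
    simp only [Finset.mem_insert, Finset.mem_singleton, not_or] at hw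
    obtain ⟨hwS, hwx, hwy, hwz⟩ := hw
    -- second bad triple containing w
    have hsecond : ∃ e2 : Finset (Fin (q*p)), e2 ⊆ S ∧ e2.card = 3 ∧
        ψdef q p χ e2 ≠ 4 ∧ w ∈ e2 := by
      by_cases hwa : grp q p w = a
      · refine ⟨{w, y, z}, sub3 q p hwS hyS hzS, card3 hwy hwz hyz, ?_, by simp⟩
        rw [psi_three q p χ (by rw [hwa, hgy]; exact hab) (by rw [hwa, hgz]; exact hac)
          (by rw [hgy, hgz]; exact hbc)]
        exact F_ne_four _ _ _
      · by_cases hwb : grp q p w = b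
        · refine ⟨{x, w, z}, sub3 q p hxS hwS hzS, card3 (Ne.symm hwx) hxz hwz, ?_, by simp⟩
          rw [psi_three q p χ (by rw [hgx, hwb]; exact hab) (by rw [hgx, hgz]; exact hac)
            (by rw [hwb, hgz]; exact hbc)]
          exact F_ne_four _ _ _
        · refine ⟨{x, y, w}, sub3 q p hxS hyS hwS, card3 hxy (Ne.symm hwx) (Ne.symm hwy), ?_, by simp⟩
          rw [psi_three q p χ (by rw [hgx, hgy]; exact hab) (by rw [hgx]; exact fun he => hwa he.symm)
            (by rw [hgy]; exact fun he => hwb he.symm)]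
          exact F_ne_four _ _ _
    obtain ⟨e2, he2s, he2c, he2b, hwe2⟩ := hsecond
    have heq := atmostone q p χ hSbad (sub3 q p hxS hyS hzS) hc1 hb1 he2s he2c he2b
    rw [← heq] at hwe2
    simp only [Finset.mem_insert, Finset.mem_singleton] at hwe2
    rcases hwe2 with h' | h' | h'
    · exact hwx h'
    · exact hwy h'
    · exact hwz h'


set_option maxHeartbeats 1000000 in
private lemma K5core : ∀ c01 c02 c03 c04 c12 c13 c14 c23 c24 c34 : Fin 3,
    F c01 c02 c12 = 3 → F c01 c03 c13 = 3 → F c01 c04 c14 = 3 →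
    F c02 c03 c23 = 3 → F c02 c04 c24 = 3 → F c03 c04 c34 = 3 →
    F c12 c13 c23 = 3 → F c12 c14 c24 = 3 → F c13 c14 c34 = 3 →
    F c23 c24 c34 = 3 → False := by decide

private lemma avoidK5 : ¬ HasMonoClique (q * p) (ψdef q p χ) 3 3 5 := by
  rintro ⟨S, hScard, hmono⟩
  -- groups of distinct vertices are distinct
  have hinj : ∀ x ∈ S, ∀ y ∈ S, x ≠ y → grp q p x ≠ grp q p y := by
    intro x hx y hy hxy hg
    have hz : (S \ {x, y}).Nonempty := by
      apply Finset.card_pos.mp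
      have h2 := Finset.le_card_sdiff ({x, y} : Finset (Fin (q * p))) S
      have h3 : ({x, y} : Finset (Fin (q * p))).card ≤ 2 :=
        Finset.card_insert_le _ _ |>.trans (by simp)
      omega
    obtain ⟨z, hz⟩ := hz
    rw [Finset.mem_sdiff] at hz
    simp only [Finset.mem_insert, Finset.mem_singleton, not_or] at hz
    obtain ⟨hzS, hzx, hzy⟩ := hz
    have hcard3 : ({x, y, z} : Finset (Fin (q * p))).card = 3 :=
      card3 hxy (Ne.symm hzx) (Ne.symm hzy)
    have hψ := hmono {x, y, z} (sub3 q p hx hy hzS) hcard3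
    by_cases hgz : grp q p x = grp q p z
    · rw [psi_one q p χ hg hgz] at hψ
      exact absurd hψ (by decide)
    · rw [psi_two q p χ hxy hg hgz] at hψ
      split_ifs at hψ
      · exact cst_ne_three _ hψ
      · exact absurd hψ (by decide)
  -- extract five distinct vertices
  have h1 : S.Nonempty := Finset.card_pos.mp (by omega)
  obtain ⟨v0, hv0⟩ := h1
  have hc1 : (S.erase v0).card = 4 := by rw [Finset.card_erase_of_mem hv0, hScard]
  obtain ⟨v1, hv1⟩ := Finset.card_pos.mp (by omega : 0 < (S.erase v0).card)
  have hc2 : ((S.erase v0).erase v1).card = 3 := by rw [Finset.card_erase_of_mem hv1, hc1]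
  obtain ⟨v2, hv2⟩ := Finset.card_pos.mp (by omega : 0 < ((S.erase v0).erase v1).card)
  have hc3 : (((S.erase v0).erase v1).erase v2).card = 2 := by
    rw [Finset.card_erase_of_mem hv2, hc2]
  obtain ⟨v3, hv3⟩ := Finset.card_pos.mp (by omega : 0 < (((S.erase v0).erase v1).erase v2).card)
  have hc4 : ((((S.erase v0).erase v1).erase v2).erase v3).card = 1 := by
    rw [Finset.card_erase_of_mem hv3, hc3]
  obtain ⟨v4, hv4⟩ := Finset.card_pos.mp (by omega : 0 < ((((S.erase v0).erase v1).erase v2).erase v3).card)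
  -- memberships and distinctness
  have hm4 : v4 ∈ S := Finset.mem_of_mem_erase (Finset.mem_of_mem_erase
    (Finset.mem_of_mem_erase (Finset.mem_of_mem_erase hv4)))
  have hm3 : v3 ∈ S := Finset.mem_of_mem_erase (Finset.mem_of_mem_erase
    (Finset.mem_of_mem_erase hv3))
  have hm2 : v2 ∈ S := Finset.mem_of_mem_erase (Finset.mem_of_mem_erase hv2)
  have hm1 : v1 ∈ S := Finset.mem_of_mem_erase hv1
  have hm0 : v0 ∈ S := hv0
  have d01 : v0 ≠ v1 := (Finset.ne_of_mem_erase hv1).symm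
  have d02 : v0 ≠ v2 := (Finset.ne_of_mem_erase (Finset.mem_of_mem_erase hv2)).symm
  have d03 : v0 ≠ v3 := (Finset.ne_of_mem_erase (Finset.mem_of_mem_erase
    (Finset.mem_of_mem_erase hv3))).symm
  have d04 : v0 ≠ v4 := (Finset.ne_of_mem_erase (Finset.mem_of_mem_erase
    (Finset.mem_of_mem_erase (Finset.mem_of_mem_erase hv4)))).symm
  have d12 : v1 ≠ v2 := (Finset.ne_of_mem_erase hv2).symm
  have d13 : v1 ≠ v3 := (Finset.ne_of_mem_erase (Finset.mem_of_mem_erase hv3)).symm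
  have d14 : v1 ≠ v4 := (Finset.ne_of_mem_erase (Finset.mem_of_mem_erase
    (Finset.mem_of_mem_erase hv4))).symm
  have d23 : v2 ≠ v3 := (Finset.ne_of_mem_erase hv3).symm
  have d24 : v2 ≠ v4 := (Finset.ne_of_mem_erase (Finset.mem_of_mem_erase hv4)).symm
  have d34 : v3 ≠ v4 := (Finset.ne_of_mem_erase hv4).symm
  have g01 := hinj v0 hm0 v1 hm1 d01
  have g02 := hinj v0 hm0 v2 hm2 d02
  have g03 := hinj v0 hm0 v3 hm3 d03
  have g04 := hinj v0 hm0 v4 hm4 d04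
  have g12 := hinj v1 hm1 v2 hm2 d12
  have g13 := hinj v1 hm1 v3 hm3 d13
  have g14 := hinj v1 hm1 v4 hm4 d14
  have g23 := hinj v2 hm2 v3 hm3 d23
  have g24 := hinj v2 hm2 v4 hm4 d24
  have g34 := hinj v3 hm3 v4 hm4 d34
  have tri : ∀ x y z : Fin (q * p), x ∈ S → y ∈ S → z ∈ S →
      x ≠ y → x ≠ z → y ≠ z →
      F (χ {grp q p x, grp q p y}) (χ {grp q p x, grp q p z}) (χ {grp q p y, grp q p z}) = 3 := by
    intro x y z hx hy hz hxy hxz hyz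
    have hψ := hmono {x, y, z} (sub3 q p hx hy hz) (card3 hxy hxz hyz)
    rw [psi_three q p χ (hinj x hx y hy hxy) (hinj x hx z hz hxz) (hinj y hy z hz hyz)] at hψ
    exact hψ
  exact K5core (χ {grp q p v0, grp q p v1}) (χ {grp q p v0, grp q p v2})
    (χ {grp q p v0, grp q p v3}) (χ {grp q p v0, grp q p v4})
    (χ {grp q p v1, grp q p v2}) (χ {grp q p v1, grp q p v3})
    (χ {grp q p v1, grp q p v4}) (χ {grp q p v2, grp q p v3})
    (χ {grp q p v2, grp q p v4}) (χ {grp q p v3, grp q p v4})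
    (tri v0 v1 v2 hm0 hm1 hm2 d01 d02 d12)
    (tri v0 v1 v3 hm0 hm1 hm3 d01 d03 d13)
    (tri v0 v1 v4 hm0 hm1 hm4 d01 d04 d14)
    (tri v0 v2 v3 hm0 hm2 hm3 d02 d03 d23)
    (tri v0 v2 v4 hm0 hm2 hm4 d02 d04 d24)
    (tri v0 v3 v4 hm0 hm3 hm4 d03 d04 d34)
    (tri v1 v2 v3 hm1 hm2 hm3 d12 d13 d23)
    (tri v1 v2 v4 hm1 hm2 hm4 d12 d14 d24)
    (tri v1 v3 v4 hm1 hm3 hm4 d13 d14 d34)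
    (tri v2 v3 v4 hm2 hm3 hm4 d23 d24 d34)


private lemma F_two_ne : ∀ (c u v w : Fin 3), (c = 1 ∨ c = 2) → u ≠ c → v ≠ c →
    F u v w ≠ cst c := by decide

private lemma avoid12 (c : Fin 3) (hc : c = 1 ∨ c = 2) (s : ℕ) (hs : 3 ≤ s)
    (hχ : ¬ HasMonoClique p χ 2 c s) :
    ¬ HasMonoClique (q * p) (ψdef q p χ) 3 (cst c) (2 * s - 1) := by
  rintro ⟨S, hScard, hmono⟩
  have hm5 : 5 ≤ S.card := by rw [hScard]; omega
  set G := S.image (grp q p) with hG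
  have hmult2 : ∀ g : Fin p, (S.filter (fun v => grp q p v = g)).card ≤ 2 := by
    intro g
    by_contra hcon
    push_neg at hcon
    obtain ⟨x, y, z, hxS, hyS, hzS, hxy, hxz, hyz, hgx, hgy, hgz⟩ :=
      fiber_extract3 q p hcon
    have hψ := hmono {x, y, z} (sub3 q p hxS hyS hzS) (card3 hxy hxz hyz)
    rw [psi_one q p χ (hgx.trans hgy.symm) (hgx.trans hgz.symm)] at hψ
    exact cst_ne_four c hψ.symm
  have hsum := sum_mult q p S
  have hGb : S.card ≤ 2 * G.card := by
    rw [hsum]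
    calc ∑ g ∈ G, (S.filter (fun v => grp q p v = g)).card
        ≤ ∑ _g ∈ G, 2 := Finset.sum_le_sum (fun g _ => hmult2 g)
      _ = 2 * G.card := by rw [Finset.sum_const, smul_eq_mul, mul_comm]
  have hG3 : 3 ≤ G.card := by omega
  -- (a) a group with two vertices forces all its edges to have color c
  have hDedge : ∀ g ∈ G, 2 ≤ (S.filter (fun v => grp q p v = g)).card →
      ∀ b ∈ G, b ≠ g → χ {g, b} = c := by
    intro g hg h2 b hb hbg
    obtain ⟨x, y, hxS, hyS, hxy, hgx, hgy⟩ := fiber_extract2 q p h2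
    obtain ⟨z, hzS, hgz⟩ := rep q p hb
    have hzx : x ≠ z := by
      intro he
      apply hbg
      rw [← hgz, ← he, hgx]
    have hzy : y ≠ z := by
      intro he
      apply hbg
      rw [← hgz, ← he, hgy]
    have hψ := hmono {x, y, z} (sub3 q p hxS hyS hzS) (card3 hxy hzx hzy)
    rw [psi_two q p χ hxy (hgx.trans hgy.symm)
      (by rw [hgx, hgz]; exact fun he => hbg he.symm)] at hψ
    rw [hgx, hgz] at hψ
    split_ifs at hψ with hsafe
    · exact cst_inj hψ
    · exact absurd hψ.symm (cst_ne_four c)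
  -- (b) two non-c edges sharing a vertex are impossible
  have hTri : ∀ u ∈ G, ∀ v ∈ G, ∀ w ∈ G, u ≠ v → u ≠ w → v ≠ w →
      χ {u, v} ≠ c → χ {u, w} ≠ c → False := by
    intro u hu v hv w hw huv huw hvw h1 h2
    obtain ⟨xu, hxuS, hgu⟩ := rep q p hu
    obtain ⟨xv, hxvS, hgv⟩ := rep q p hv
    obtain ⟨xw, hxwS, hgw⟩ := rep q p hw
    have duv : xu ≠ xv := fun he => huv (by rw [← hgu, he, hgv])
    have duw : xu ≠ xw := fun he => huw (by rw [← hgu, he, hgw])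
    have dvw : xv ≠ xw := fun he => hvw (by rw [← hgv, he, hgw])
    have hψ := hmono {xu, xv, xw} (sub3 q p hxuS hxvS hxwS) (card3 duv duw dvw)
    rw [psi_three q p χ (by rw [hgu, hgv]; exact huv) (by rw [hgu, hgw]; exact huw)
      (by rw [hgv, hgw]; exact hvw)] at hψ
    rw [hgu, hgv, hgw] at hψ
    exact F_two_ne c _ _ _ hc h1 h2 hψ
  set D := G.filter (fun g => 2 ≤ (S.filter (fun v => grp q p v = g)).card) with hD
  have hDsub : D ⊆ G := Finset.filter_subset _ _
  have hcardsplit : S.card = G.card + D.card := by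
    rw [hsum]
    rw [← Finset.sum_filter_add_sum_filter_not G
      (fun g => 2 ≤ (S.filter (fun v => grp q p v = g)).card)]
    have e1 : ∑ g ∈ G.filter (fun g => 2 ≤ (S.filter (fun v => grp q p v = g)).card),
        (S.filter (fun v => grp q p v = g)).card = 2 * D.card := by
      rw [← hD]
      rw [Finset.sum_congr rfl (fun g hg => ?_)]
      · rw [Finset.sum_const, smul_eq_mul, mul_comm]
      · rw [hD, Finset.mem_filter] at hg
        have := hmult2 g
        omega
    have e2 : ∑ g ∈ G.filter (fun g => ¬ 2 ≤ (S.filter (fun v => grp q p v = g)).card),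
        (S.filter (fun v => grp q p v = g)).card
        = (G.filter (fun g => ¬ 2 ≤ (S.filter (fun v => grp q p v = g)).card)).card := by
      rw [Finset.sum_congr rfl (fun g hg => ?_)]
      · rw [Finset.sum_const, smul_eq_mul, mul_one]
      · rw [Finset.mem_filter] at hg
        have := mult_pos q p (hG ▸ hg.1)
        omega
    rw [e1, e2]
    have := Finset.card_filter_add_card_filter_not (s := G)
      (p := fun g => 2 ≤ (S.filter (fun v => grp q p v = g)).card)
    rw [← hD] at this
    omega
  set Bs := (G.powersetCard 2).filter (fun P => χ P ≠ c) with hBs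
  have hBsmem : ∀ P ∈ Bs, P ⊆ G ∧ P.card = 2 ∧ χ P ≠ c := by
    intro P hP
    rw [hBs, Finset.mem_filter, Finset.mem_powersetCard] at hP
    exact ⟨hP.1.1, hP.1.2, hP.2⟩
  -- bad pairs avoid D
  have hBsD : ∀ P ∈ Bs, ∀ g ∈ P, g ∉ D := by
    intro P hP g hgP hgD
    obtain ⟨hPsub, hPcard, hPbad⟩ := hBsmem P hP
    obtain ⟨u, v, huv, rfl⟩ := Finset.card_eq_two.mp hPcard
    rw [hD, Finset.mem_filter] at hgD
    rcases Finset.mem_insert.mp hgP with rfl | hgv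
    · exact hPbad (hDedge g hgD.1 hgD.2 v
        (hPsub (by simp : v ∈ ({g, v} : Finset (Fin p)))) (Ne.symm huv))
    · rw [Finset.mem_singleton] at hgv
      subst hgv
      have := hDedge g hgD.1 hgD.2 u
        (hPsub (by simp : u ∈ ({u, g} : Finset (Fin p)))) huv
      rw [Finset.pair_comm] at this
      exact hPbad this
  -- helper : a bad pair containing g yields its other endpoint
  have hother : ∀ P ∈ Bs, ∀ g ∈ P, ∃ o, o ∈ G ∧ o ≠ g ∧ P = {g, o} ∧ χ {g, o} ≠ c := by
    intro P hP g hgP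
    obtain ⟨hPsub, hPcard, hPbad⟩ := hBsmem P hP
    obtain ⟨u, v, huv, rfl⟩ := Finset.card_eq_two.mp hPcard
    rcases Finset.mem_insert.mp hgP with rfl | hgv
    · exact ⟨v, hPsub (by simp : v ∈ ({g, v} : Finset (Fin p))), Ne.symm huv, rfl, hPbad⟩
    · rw [Finset.mem_singleton] at hgv
      subst hgv
      refine ⟨u, hPsub (by simp : u ∈ ({u, g} : Finset (Fin p))), huv, Finset.pair_comm u g, ?_⟩
      rw [← Finset.pair_comm u g]
      exact hPbad
  have hBsDisj : ∀ P1 ∈ Bs, ∀ P2 ∈ Bs, P1 ≠ P2 → Disjoint P1 P2 := by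
    intro P1 hP1 P2 hP2 hne
    rw [Finset.disjoint_left]
    intro g hg1 hg2
    obtain ⟨o1, ho1G, ho1g, hPe1, hbad1⟩ := hother P1 hP1 g hg1
    obtain ⟨o2, ho2G, ho2g, hPe2, hbad2⟩ := hother P2 hP2 g hg2
    have ho12 : o1 ≠ o2 := by
      intro he
      apply hne
      rw [hPe1, hPe2, he]
    have hgG : g ∈ G := (hBsmem P1 hP1).1 hg1
    exact hTri g hgG o1 ho1G o2 ho2G (Ne.symm ho1g) (Ne.symm ho2g) ho12 hbad1 hbad2
  have hbiU : Bs.biUnion (fun P => P) ⊆ G \ D := by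
    intro g hg
    rw [Finset.mem_biUnion] at hg
    obtain ⟨P, hP, hgP⟩ := hg
    rw [Finset.mem_sdiff]
    exact ⟨(hBsmem P hP).1 hgP, hBsD P hP g hgP⟩
  have hbiUcard : (Bs.biUnion (fun P => P)).card = 2 * Bs.card := by
    rw [Finset.card_biUnion hBsDisj]
    rw [Finset.sum_congr rfl (fun P hP => (hBsmem P hP).2.1)]
    rw [Finset.sum_const, smul_eq_mul, mul_comm]
  have h2Bs : 2 * Bs.card ≤ G.card - D.card := by
    have h1 := Finset.card_le_card hbiU
    rw [hbiUcard, Finset.card_sdiff_of_subset hDsub] at h1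
    exact h1
  have hGne : G.Nonempty := Finset.card_pos.mp (by omega)
  obtain ⟨g0, hg0⟩ := hGne
  set R := Bs.image (fun P => if h : P.Nonempty then P.max' h else g0) with hR
  set W := G \ R with hW
  have hDG : D.card ≤ G.card := Finset.card_le_card hDsub
  have hWcard : s ≤ W.card := by
    have h1 : R.card ≤ Bs.card := Finset.card_image_le
    have h2 := Finset.le_card_sdiff R G
    rw [← hW] at h2
    omega
  have hWedge : ∀ u ∈ W, ∀ v ∈ W, u ≠ v → χ {u, v} = c := by
    intro u hu v hv huv
    by_contra hbad
    have huG : u ∈ G := (Finset.mem_sdiff.mp (hW ▸ hu)).1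
    have hvG : v ∈ G := (Finset.mem_sdiff.mp (hW ▸ hv)).1
    have hP : ({u, v} : Finset (Fin p)) ∈ Bs := by
      rw [hBs, Finset.mem_filter, Finset.mem_powersetCard]
      refine ⟨⟨?_, Finset.card_pair huv⟩, hbad⟩
      intro t ht
      rcases Finset.mem_insert.mp ht with rfl | ht'
      · exact huG
      · rw [Finset.mem_singleton] at ht'
        exact ht' ▸ hvG
    have hne : ({u, v} : Finset (Fin p)).Nonempty := ⟨u, by simp⟩
    have hmaxR : ({u, v} : Finset (Fin p)).max' hne ∈ R := by
      rw [hR, Finset.mem_image]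
      exact ⟨{u, v}, hP, dif_pos hne⟩
    have hmaxW := Finset.max'_mem ({u, v} : Finset (Fin p)) hne
    rcases Finset.mem_insert.mp hmaxW with he | he
    · rw [he] at hmaxR
      exact (Finset.mem_sdiff.mp (hW ▸ hu)).2 hmaxR
    · rw [Finset.mem_singleton] at he
      rw [he] at hmaxR
      exact (Finset.mem_sdiff.mp (hW ▸ hv)).2 hmaxR
  apply hχ
  obtain ⟨W', hW'sub, hW'card⟩ := Finset.exists_subset_card_eq hWcard
  refine ⟨W', hW'card, ?_⟩
  intro e he hecard
  obtain ⟨a, b, hab, rfl⟩ := Finset.card_eq_two.mp hecard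
  exact hWedge a (hW'sub (he (by simp : a ∈ ({a, b} : Finset (Fin p)))))
    b (hW'sub (he (by simp : b ∈ ({a, b} : Finset (Fin p))))) hab


private lemma F_zero_first : ∀ u v w : Fin 3, F u v w = 0 → u = 0 := by decide

private lemma avoid0 (s : ℕ) (hs : 3 ≤ s) (hχ : ¬ HasMonoClique p χ 2 0 s) :
    ¬ HasCliqueMinusEdge (q * p) (ψdef q p χ) 0 (2 * s - 1) := by
  rintro ⟨S, hScard, hSbad⟩
  have hm5 : 5 ≤ S.card := by rw [hScard]; omega
  set G := S.image (grp q p) with hG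
  -- step 1 : every group contains at most 2 vertices of S
  have hmult2 : ∀ g : Fin p, (S.filter (fun v => grp q p v = g)).card ≤ 2 := by
    intro g
    by_contra hcon
    push_neg at hcon
    obtain ⟨x, y, z, hxS, hyS, hzS, hxy, hxz, hyz, hgx, hgy, hgz⟩ :=
      fiber_extract3 q p (by omega : 3 ≤ (S.filter (fun v => grp q p v = g)).card)
    have hb1 : ψdef q p χ {x, y, z} ≠ 0 := by
      rw [psi_one q p χ (hgx.trans hgy.symm) (hgx.trans hgz.symm)]
      decide
    have hc1 := card3 hxy hxz hyz
    have hwne : (S \ ({x, y, z} : Finset (Fin (q * p)))).Nonempty := by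
      apply Finset.card_pos.mp
      have h2 := Finset.le_card_sdiff ({x, y, z} : Finset (Fin (q * p))) S
      rw [hc1] at h2
      omega
    obtain ⟨w, hw⟩ := hwne
    rw [Finset.mem_sdiff] at hw
    simp only [Finset.mem_insert, Finset.mem_singleton, not_or] at hw
    obtain ⟨hwS, hwx, hwy, hwz⟩ := hw
    have key : ∃ e2 : Finset (Fin (q * p)), e2 ⊆ S ∧ e2.card = 3 ∧
        ψdef q p χ e2 ≠ 0 ∧ w ∈ e2 := by
      by_cases hgw : grp q p w = g
      · refine ⟨{x, y, w}, sub3 q p hxS hyS hwS,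
          card3 hxy (Ne.symm hwx) (Ne.symm hwy), ?_, by simp⟩
        rw [psi_one q p χ (hgx.trans hgy.symm) (hgx.trans hgw.symm)]
        decide
      · have cxy : crd q p x ≠ crd q p y :=
          fun h => hxy (grp_crd_inj q p (hgx.trans hgy.symm) h)
        have cxz : crd q p x ≠ crd q p z :=
          fun h => hxz (grp_crd_inj q p (hgx.trans hgz.symm) h)
        have cyz : crd q p y ≠ crd q p z :=
          fun h => hyz (grp_crd_inj q p (hgy.trans hgz.symm) h)
        by_cases h1 : crd q p w = crd q p x
        · refine ⟨{y, z, w}, sub3 q p hyS hzS hwS,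
            card3 hyz (Ne.symm hwy) (Ne.symm hwz), ?_, by simp⟩
          rw [psi_two q p χ hyz (hgy.trans hgz.symm)
            (by rw [hgy]; exact fun he => hgw he.symm)]
          rw [if_neg]
          · decide
          · push_neg
            constructor
            · rw [h1]; exact cxy
            · rw [h1]; exact cxz
        · by_cases h2 : crd q p w = crd q p y
          · refine ⟨{x, z, w}, sub3 q p hxS hzS hwS,
              card3 hxz (Ne.symm hwx) (Ne.symm hwz), ?_, by simp⟩
            rw [psi_two q p χ hxz (hgx.trans hgz.symm)
              (by rw [hgx]; exact fun he => hgw he.symm)]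
            rw [if_neg]
            · decide
            · push_neg
              constructor
              · rw [h2]; exact fun he => cxy he.symm
              · rw [h2]; exact cyz
          · refine ⟨{x, y, w}, sub3 q p hxS hyS hwS,
              card3 hxy (Ne.symm hwx) (Ne.symm hwy), ?_, by simp⟩
            rw [psi_two q p χ hxy (hgx.trans hgy.symm)
              (by rw [hgx]; exact fun he => hgw he.symm)]
            rw [if_neg]
            · decide
            · push_neg
              exact ⟨h1, h2⟩
    obtain ⟨e2, he2s, he2c, he2b, hwe2⟩ := key
    have heq := atmostone q p χ hSbad (sub3 q p hxS hyS hzS) hc1 hb1 he2s he2c he2b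
    rw [← heq] at hwe2
    simp only [Finset.mem_insert, Finset.mem_singleton] at hwe2
    rcases hwe2 with h' | h' | h'
    · exact hwx h'
    · exact hwy h'
    · exact hwz h'
  have hsum := sum_mult q p S
  have hGb : S.card ≤ 2 * G.card := by
    rw [hsum]
    calc ∑ g ∈ G, (S.filter (fun v => grp q p v = g)).card
        ≤ ∑ _g ∈ G, 2 := Finset.sum_le_sum (fun g _ => hmult2 g)
      _ = 2 * G.card := by rw [Finset.sum_const, smul_eq_mul, mul_comm]
  -- step 2 : all pairs of groups get color 0
  have hedge : ∀ a ∈ G, ∀ b ∈ G, a ≠ b → χ {a, b} = 0 := by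
    intro a ha b hb hab
    obtain ⟨xb, hxbS, hgb⟩ := rep q p hb
    have hforce : ∀ x1 ∈ S, ∀ w ∈ S, grp q p x1 = a → ¬ grp q p w = a →
        ¬ grp q p w = b → ψdef q p χ {x1, xb, w} = 0 → χ {a, b} = 0 := by
      intro x1 hx1S w hwS hg1 hwa hwb hψ
      rw [psi_three q p χ (by rw [hg1, hgb]; exact hab)
        (by rw [hg1]; exact fun he => hwa he.symm)
        (by rw [hgb]; exact fun he => hwb he.symm)] at hψ
      rw [hg1, hgb] at hψ
      exact F_zero_first _ _ _ hψ
    set Out := S.filter (fun v => ¬ grp q p v = a ∧ ¬ grp q p v = b) with hOut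
    by_cases hOc : 2 ≤ Out.card
    · obtain ⟨T, hTsub, hTcard⟩ := Finset.exists_subset_card_eq hOc
      obtain ⟨w1, w2, hw12, rfl⟩ := Finset.card_eq_two.mp hTcard
      have hw1 := Finset.mem_filter.mp (hTsub (by simp : w1 ∈ ({w1, w2} : Finset (Fin (q*p)))))
      have hw2 := Finset.mem_filter.mp (hTsub (by simp : w2 ∈ ({w1, w2} : Finset (Fin (q*p)))))
      obtain ⟨xa, hxaS, hga⟩ := rep q p ha
      have dab : xa ≠ xb := fun he => hab (by rw [← hga, he, hgb])
      have daw1 : xa ≠ w1 := fun he => hw1.2.1 (by rw [← he, hga])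
      have dbw1 : xb ≠ w1 := fun he => hw1.2.2 (by rw [← he, hgb])
      have daw2 : xa ≠ w2 := fun he => hw2.2.1 (by rw [← he, hga])
      have dbw2 : xb ≠ w2 := fun he => hw2.2.2 (by rw [← he, hgb])
      by_cases hψ1 : ψdef q p χ {xa, xb, w1} = 0
      · exact hforce xa hxaS w1 hw1.1 hga hw1.2.1 hw1.2.2 hψ1
      by_cases hψ2 : ψdef q p χ {xa, xb, w2} = 0
      · exact hforce xa hxaS w2 hw2.1 hga hw2.2.1 hw2.2.2 hψ2
      exfalso
      have heq := atmostone q p χ hSbad (sub3 q p hxaS hxbS hw1.1)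
        (card3 dab daw1 dbw1) hψ1 (sub3 q p hxaS hxbS hw2.1)
        (card3 dab daw2 dbw2) hψ2
      have : w1 ∈ ({xa, xb, w2} : Finset (Fin (q*p))) := heq ▸ (by simp)
      simp only [Finset.mem_insert, Finset.mem_singleton] at this
      rcases this with h' | h' | h'
      · exact daw1 h'.symm
      · exact dbw1 h'.symm
      · exact hw12 h'
    · -- few outside vertices : both groups have two vertices
      have hsplit : (S.filter (fun v => grp q p v = a)).card
          + (S.filter (fun v => grp q p v = b)).card + Out.card = S.card := by
        have h1 := Finset.card_filter_add_card_filter_not (s := S)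
          (p := fun v => grp q p v = a)
        have h2 := Finset.card_filter_add_card_filter_not
          (s := S.filter (fun v => ¬ grp q p v = a)) (p := fun v => grp q p v = b)
        have e3 : (S.filter (fun v => ¬ grp q p v = a)).filter (fun v => grp q p v = b)
            = S.filter (fun v => grp q p v = b) := by
          rw [Finset.filter_filter]
          apply Finset.filter_congr
          intro v _
          constructor
          · rintro ⟨_, h⟩; exact h
          · intro h
            exact ⟨fun h' => hab (by rw [← h', h]), h⟩
        have e4 : (S.filter (fun v => ¬ grp q p v = a)).filter (fun v => ¬ grp q p v = b)
            = Out := by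
          rw [Finset.filter_filter, hOut]
        rw [e3, e4] at h2
        omega
      have hOc1 : Out.card ≤ 1 := by omega
      have hma := hmult2 a
      have hmb := hmult2 b
      have hma2 : 2 ≤ (S.filter (fun v => grp q p v = a)).card := by omega
      have hOne : Out.Nonempty := Finset.card_pos.mp (by omega)
      obtain ⟨w, hw⟩ := hOne
      have hw' := Finset.mem_filter.mp hw
      obtain ⟨xa1, xa2, hxa1S, hxa2S, hxa12, hga1, hga2⟩ := fiber_extract2 q p hma2
      have d1b : xa1 ≠ xb := fun he => hab (by rw [← hga1, he, hgb])
      have d2b : xa2 ≠ xb := fun he => hab (by rw [← hga2, he, hgb])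
      have d1w : xa1 ≠ w := fun he => hw'.2.1 (by rw [← he, hga1])
      have d2w : xa2 ≠ w := fun he => hw'.2.1 (by rw [← he, hga2])
      have dbw : xb ≠ w := fun he => hw'.2.2 (by rw [← he, hgb])
      by_cases hψ1 : ψdef q p χ {xa1, xb, w} = 0
      · exact hforce xa1 hxa1S w hw'.1 hga1 hw'.2.1 hw'.2.2 hψ1
      by_cases hψ2 : ψdef q p χ {xa2, xb, w} = 0
      · exact hforce xa2 hxa2S w hw'.1 hga2 hw'.2.1 hw'.2.2 hψ2
      exfalso
      have heq := atmostone q p χ hSbad (sub3 q p hxa1S hxbS hw'.1)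
        (card3 d1b d1w dbw) hψ1 (sub3 q p hxa2S hxbS hw'.1)
        (card3 d2b d2w dbw) hψ2
      have : xa1 ∈ ({xa2, xb, w} : Finset (Fin (q*p))) := heq ▸ (by simp)
      simp only [Finset.mem_insert, Finset.mem_singleton] at this
      rcases this with h' | h' | h'
      · exact hxa12 h'
      · exact d1b h'
      · exact d1w h'
  -- step 3 : conclude
  apply hχ
  have hGcard : s ≤ G.card := by omega
  obtain ⟨W', hW'sub, hW'card⟩ := Finset.exists_subset_card_eq hGcard
  refine ⟨W', hW'card, ?_⟩
  intro e he hecard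
  obtain ⟨u, v, huv, rfl⟩ := Finset.card_eq_two.mp hecard
  exact hedge u (hW'sub (he (by simp : u ∈ ({u, v} : Finset (Fin p)))))
    v (hW'sub (he (by simp : v ∈ ({u, v} : Finset (Fin p))))) huv


private lemma construction (hq : 3 ≤ q) (s₁ s₂ s₃ : ℕ) (hs₁ : 3 ≤ s₁) (hs₂ : 3 ≤ s₂)
    (hs₃ : 3 ≤ s₃)
    (h1 : ¬ HasMonoClique p χ 2 0 s₁) (h2 : ¬ HasMonoClique p χ 2 1 s₂)
    (h3 : ¬ HasMonoClique p χ 2 2 s₃) :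
    ∃ ψ : Finset (Fin (q * p)) → Fin 5,
      ¬ HasCliqueMinusEdge (q * p) ψ 0 (2 * s₁ - 1) ∧
      ¬ HasMonoClique (q * p) ψ 3 1 (2 * s₂ - 1) ∧
      ¬ HasMonoClique (q * p) ψ 3 2 (2 * s₃ - 1) ∧
      ¬ HasMonoClique (q * p) ψ 3 3 5 ∧
      ¬ HasCliqueMinusEdge (q * p) ψ 4 (q + 1) := by
  refine ⟨ψdef q p χ, avoid0 q p χ s₁ hs₁ h1, ?_, ?_, avoidK5 q p χ, avoid4 q p χ hq⟩
  · have := avoid12 q p χ 1 (Or.inl rfl) s₂ hs₂ h2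
    rwa [show cst (1 : Fin 3) = (1 : Fin 5) from rfl] at this
  · have := avoid12 q p χ 2 (Or.inr rfl) s₃ hs₃ h3
    rwa [show cst (2 : Fin 3) = (2 : Fin 5) from rfl] at this

end Construction

private lemma transfer {n N : ℕ} (h : n ≤ N) (s₁ s₂ s₃ q : ℕ)
    (ψ : Finset (Fin N) → Fin 5)
    (h0 : ¬ HasCliqueMinusEdge N ψ 0 (2 * s₁ - 1))
    (h1 : ¬ HasMonoClique N ψ 3 1 (2 * s₂ - 1))
    (h2 : ¬ HasMonoClique N ψ 3 2 (2 * s₃ - 1))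
    (h3 : ¬ HasMonoClique N ψ 3 3 5)
    (h4 : ¬ HasCliqueMinusEdge N ψ 4 (q + 1)) :
    ∃ ψ' : Finset (Fin n) → Fin 5,
      ¬ HasCliqueMinusEdge n ψ' 0 (2 * s₁ - 1) ∧
      ¬ HasMonoClique n ψ' 3 1 (2 * s₂ - 1) ∧
      ¬ HasMonoClique n ψ' 3 2 (2 * s₃ - 1) ∧
      ¬ HasMonoClique n ψ' 3 3 5 ∧
      ¬ HasCliqueMinusEdge n ψ' 4 (q + 1) := by
  set emb : Fin n ↪ Fin N := Fin.castLEEmb h with hembdef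
  set ψ' : Finset (Fin n) → Fin 5 := fun e => ψ (e.map emb) with hψ'
  have liftMono : ∀ (i : Fin 5) (m : ℕ),
      HasMonoClique n ψ' 3 i m → HasMonoClique N ψ 3 i m := by
    rintro i m ⟨S, hc, hm⟩
    refine ⟨S.map emb, by rw [Finset.card_map, hc], ?_⟩
    intro e he hec
    obtain ⟨u, hu, rfl⟩ := Finset.subset_map_iff.mp he
    rw [Finset.card_map] at hec
    exact hm u hu hec
  have liftMinus : ∀ (i : Fin 5) (m : ℕ),
      HasCliqueMinusEdge n ψ' i m → HasCliqueMinusEdge N ψ i m := by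
    rintro i m ⟨S, hc, hcnt⟩
    refine ⟨S.map emb, by rw [Finset.card_map, hc], ?_⟩
    rw [Finset.powersetCard_map, Finset.filter_map, Finset.card_map]
    have : ((S.powersetCard 3).filter
        ((fun e => ψ e ≠ i) ∘ (Finset.mapEmbedding emb).toEmbedding))
        = (S.powersetCard 3).filter (fun e => ψ' e ≠ i) := by
      apply Finset.filter_congr
      intro e _
      exact Iff.rfl
    rw [this]
    exact hcnt
  exact ⟨ψ', fun hx => h0 (liftMinus 0 _ hx), fun hx => h1 (liftMono 1 _ hx),
    fun hx => h2 (liftMono 2 _ hx), fun hx => h3 (liftMono 3 _ hx),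
    fun hx => h4 (liftMinus 4 _ hx)⟩


/-- from a 3-coloring of the pairs of a `p`-element set with no
monochromatic `K_{s_i}` in color `i`, one gets a 5-coloring of the triples of a
`q·p`-element set avoiding `K_{2s₁-1}^{(3)} - e` in color 1, monochromatic
`K_{2s₂-1}^{(3)}`, `K_{2s₃-1}^{(3)}` in colors 2, 3, a monochromatic
`K_5^{(3)}` in color 4, and `K_{q+1}^{(3)} - e` in color 5; consequently
`R(K_{2s₁-1}^{(3)}-e, K_{2s₂-1}^{(3)}, K_{2s₃-1}^{(3)}, K_5^{(3)},
K_{q+1}^{(3)}-e; 3) > q (R(K_{s₁}, K_{s₂}, K_{s₃}; 2) - 1)`. -/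
theorem five_color_lift (q s₁ s₂ s₃ p : ℕ) (hq : 3 ≤ q)
    (hs₁ : 3 ≤ s₁) (hs₂ : 3 ≤ s₂) (hs₃ : 3 ≤ s₃) (hp : 3 ≤ p)
    (χ : Finset (Fin p) → Fin 3)
    (hχ₁ : ¬ HasMonoClique p χ 2 0 s₁)
    (hχ₂ : ¬ HasMonoClique p χ 2 1 s₂)
    (hχ₃ : ¬ HasMonoClique p χ 2 2 s₃) :
    (∃ ψ : Finset (Fin (q * p)) → Fin 5,
      ¬ HasCliqueMinusEdge (q * p) ψ 0 (2 * s₁ - 1) ∧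
      ¬ HasMonoClique (q * p) ψ 3 1 (2 * s₂ - 1) ∧
      ¬ HasMonoClique (q * p) ψ 3 2 (2 * s₃ - 1) ∧
      ¬ HasMonoClique (q * p) ψ 3 3 5 ∧
      ¬ HasCliqueMinusEdge (q * p) ψ 4 (q + 1)) ∧
    q * (RGraph3 s₁ s₂ s₃ - 1) < RHyp5 s₁ s₂ s₃ q := by
  constructor
  · exact construction q p χ hq s₁ s₂ s₃ hs₁ hs₂ hs₃ hχ₁ hχ₂ hχ₃
  · -- nonemptiness of the RHyp5 defining set
    obtain ⟨n0, hn0pos, hn0⟩ := hypRamseyFin (2 * s₁ + 2 * s₂ + 2 * s₃ + q + 6)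
    have hn0mem : n0 ∈ {p' | 0 < p' ∧ ∀ ψ : Finset (Fin p') → Fin 5,
        HasCliqueMinusEdge p' ψ 0 (2 * s₁ - 1) ∨
          HasMonoClique p' ψ 3 1 (2 * s₂ - 1) ∨
            HasMonoClique p' ψ 3 2 (2 * s₃ - 1) ∨
              HasMonoClique p' ψ 3 3 5 ∨
                HasCliqueMinusEdge p' ψ 4 (q + 1)} := by
      refine ⟨hn0pos, ?_⟩
      intro ψ
      obtain ⟨c, S, hScard, hmono⟩ := hn0 ψ
      have mkMono : ∀ m : ℕ, m ≤ 2 * s₁ + 2 * s₂ + 2 * s₃ + q + 6 →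
          HasMonoClique n0 ψ 3 c m := by
        intro m hm
        obtain ⟨S', hsub, hcard⟩ := Finset.exists_subset_card_eq
          (by rw [hScard]; exact hm : m ≤ S.card)
        exact ⟨S', hcard, fun e he hec => hmono e (he.trans hsub) hec⟩
      have mkMinus : ∀ m : ℕ, m ≤ 2 * s₁ + 2 * s₂ + 2 * s₃ + q + 6 →
          HasCliqueMinusEdge n0 ψ c m := by
        intro m hm
        obtain ⟨S', hsub, hcard⟩ := Finset.exists_subset_card_eq
          (by rw [hScard]; exact hm : m ≤ S.card)
        refine ⟨S', hcard, ?_⟩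
        have he : (S'.powersetCard 3).filter (fun e => ψ e ≠ c) = ∅ := by
          rw [Finset.filter_eq_empty_iff]
          intro e he'
          rw [Finset.mem_powersetCard] at he'
          exact not_not_intro (hmono e (he'.1.trans hsub) he'.2)
        rw [he]
        simp
      fin_cases c
      · exact Or.inl (mkMinus (2 * s₁ - 1) (by omega))
      · exact Or.inr (Or.inl (mkMono (2 * s₂ - 1) (by omega)))
      · exact Or.inr (Or.inr (Or.inl (mkMono (2 * s₃ - 1) (by omega))))
      · exact Or.inr (Or.inr (Or.inr (Or.inl (mkMono 5 (by omega)))))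
      · exact Or.inr (Or.inr (Or.inr (Or.inr (mkMinus (q + 1) (by omega)))))
    have hRHmem : RHyp5 s₁ s₂ s₃ q ∈ {p' | 0 < p' ∧ ∀ ψ : Finset (Fin p') → Fin 5,
        HasCliqueMinusEdge p' ψ 0 (2 * s₁ - 1) ∨
          HasMonoClique p' ψ 3 1 (2 * s₂ - 1) ∨
            HasMonoClique p' ψ 3 2 (2 * s₃ - 1) ∨
              HasMonoClique p' ψ 3 3 5 ∨
                HasCliqueMinusEdge p' ψ 4 (q + 1)} := Nat.sInf_mem ⟨n0, hn0mem⟩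
    have hRHpos : 0 < RHyp5 s₁ s₂ s₃ q := hRHmem.1
    by_cases hRG : {p' | 0 < p' ∧ ∀ χ' : Finset (Fin p') → Fin 3,
        HasMonoClique p' χ' 2 0 s₁ ∨ HasMonoClique p' χ' 2 1 s₂ ∨
          HasMonoClique p' χ' 2 2 s₃}.Nonempty
    · have hRmem : RGraph3 s₁ s₂ s₃ ∈ {p' | 0 < p' ∧ ∀ χ' : Finset (Fin p') → Fin 3,
          HasMonoClique p' χ' 2 0 s₁ ∨ HasMonoClique p' χ' 2 1 s₂ ∨
            HasMonoClique p' χ' 2 2 s₃} := Nat.sInf_mem hRG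
      have hRpos : 0 < RGraph3 s₁ s₂ s₃ := hRmem.1
      rcases Nat.lt_or_ge (RGraph3 s₁ s₂ s₃) 2 with hR1 | hR2
      · have h1 : RGraph3 s₁ s₂ s₃ - 1 = 0 := by omega
        rw [h1, Nat.mul_zero]
        exact hRHpos
      · have hRm1 : RGraph3 s₁ s₂ s₃ - 1 < RGraph3 s₁ s₂ s₃ := by omega
        have hnot : RGraph3 s₁ s₂ s₃ - 1 ∉ {p' | 0 < p' ∧ ∀ χ' : Finset (Fin p') → Fin 3,
            HasMonoClique p' χ' 2 0 s₁ ∨ HasMonoClique p' χ' 2 1 s₂ ∨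
              HasMonoClique p' χ' 2 2 s₃} := Nat.notMem_of_lt_sInf hRm1
        have hex : ∃ χ' : Finset (Fin (RGraph3 s₁ s₂ s₃ - 1)) → Fin 3,
            ¬ HasMonoClique _ χ' 2 0 s₁ ∧ ¬ HasMonoClique _ χ' 2 1 s₂ ∧
              ¬ HasMonoClique _ χ' 2 2 s₃ := by
          by_contra hcon
          push_neg at hcon
          apply hnot
          refine ⟨by omega, ?_⟩
          intro χ'
          by_contra hcon2
          push_neg at hcon2
          exact hcon2.2.2 (hcon χ' hcon2.1 hcon2.2.1)
        obtain ⟨χ', hng1, hng2, hng3⟩ := hex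
        obtain ⟨ψbig, hb0, hb1, hb2, hb3, hb4⟩ :=
          construction q (RGraph3 s₁ s₂ s₃ - 1) χ' hq s₁ s₂ s₃ hs₁ hs₂ hs₃ hng1 hng2 hng3
        by_contra hcon
        push_neg at hcon
        obtain ⟨ψ', hg0, hg1, hg2, hg3, hg4⟩ :=
          transfer hcon s₁ s₂ s₃ q ψbig hb0 hb1 hb2 hb3 hb4
        rcases hRHmem.2 ψ' with h | h | h | h | h
        exacts [hg0 h, hg1 h, hg2 h, hg3 h, hg4 h]
    · have h0 : RGraph3 s₁ s₂ s₃ = 0 := by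
        unfold RGraph3
        exact Nat.sInf_eq_zero.mpr (Or.inr (Set.not_nonempty_iff_eq_empty.mp hRG))
      rw [h0]
      simpa using hRHpos
end
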